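/- arXiv:0803.2181 — 5 statements merged into one kernel-verified Lean document; each statement's English description precedes it below -/
import Mathlib

section
/- Let d ≥ 1 and let M(j) denote the number of points k = (k_1,...,k_d) in the positive integer lattice Z_+^d with k_1 · k_2 · ... · k_d ≤ j. Then M(j)/(j (log j)^(d-1)) → 1/(d-1)! as j → ∞. -/
open Filter Real Finset

/-- recursive divisor-counting function -/
def Dcnt : ℕ → ℕ → ℕ
  | 0, j => if j = 0 then 0 else 1
  | d+1, j => ∑ k ∈ Finset.Icc 1 j, Dcnt d (j / k)

/-- Finset of lattice points -/
def Tfin (d j : ℕ) : Finset (Fin d → ℕ) :=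
  (Fintype.piFinset fun _ : Fin d => Finset.Icc 1 j).filter (fun k => ∏ i, k i ≤ j)

lemma set_eq_Tfin (d j : ℕ) :
    {k : Fin d → ℕ | (∀ i, 1 ≤ k i) ∧ (∏ i, k i) ≤ j} = ↑(Tfin d j) := by
  ext k
  simp only [Set.mem_setOf_eq, Tfin, Finset.coe_filter, Fintype.mem_piFinset,
    Finset.mem_Icc, Set.mem_setOf_eq]
  constructor
  · rintro ⟨h1, h2⟩
    refine ⟨fun i => ⟨h1 i, ?_⟩, h2⟩
    calc k i ≤ ∏ i, k i := Finset.single_le_prod' (fun i _ => h1 i) (Finset.mem_univ i)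
      _ ≤ j := h2
  · rintro ⟨h1, h2⟩
    exact ⟨fun i => (h1 i).1, h2⟩

lemma Tfin_succ (d j : ℕ) :
    Tfin (d+1) j = (Finset.Icc 1 j).biUnion
      (fun a => (Tfin d (j / a)).image (Fin.cons (α := fun _ : Fin (d+1) => ℕ) a)) := by
  ext f
  simp only [Tfin, Finset.mem_filter, Fintype.mem_piFinset, Finset.mem_Icc,
    Finset.mem_biUnion, Finset.mem_image]
  constructor
  · rintro ⟨h1, h2⟩
    have h0 : 1 ≤ f 0 := (h1 0).1
    have h2' : f 0 * ∏ i : Fin d, f i.succ ≤ j := by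
      rw [← Fin.prod_univ_succ]; exact h2
    have htail : ∏ i : Fin d, Fin.tail f i ≤ j / f 0 := by
      refine (Nat.le_div_iff_mul_le h0).2 ?_
      rw [mul_comm]
      exact h2'
    refine ⟨f 0, ⟨h0, le_trans ?_ h2⟩, Fin.tail f, ⟨?_, htail⟩, Fin.cons_self_tail f⟩
    · exact Finset.single_le_prod' (fun i _ => (h1 i).1) (Finset.mem_univ 0)
    · intro i
      refine ⟨(h1 i.succ).1, ?_⟩
      calc Fin.tail f i ≤ ∏ i', Fin.tail f i' :=
            Finset.single_le_prod' (fun i' _ => (h1 i'.succ).1) (Finset.mem_univ i)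
        _ ≤ j / f 0 := htail
  · rintro ⟨a, ⟨ha1, haj⟩, t, ⟨ht1, ht2⟩, rfl⟩
    constructor
    · intro i
      refine Fin.cases ?_ ?_ i
      · exact ⟨ha1, haj⟩
      · intro i'
        simp only [Fin.cons_succ]
        exact ⟨(ht1 i').1, le_trans (ht1 i').2 (Nat.div_le_self j a)⟩
    · rw [Fin.prod_univ_succ]
      simp only [Fin.cons_zero, Fin.cons_succ]
      calc a * ∏ i, t i ≤ a * (j / a) := Nat.mul_le_mul_left a ht2
        _ ≤ j := Nat.mul_div_le j a

lemma Tfin_card (d j : ℕ) : (Tfin d j).card = Dcnt d j := by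
  induction d generalizing j with
  | zero =>
      rcases Nat.eq_zero_or_pos j with rfl | hj
      · simp [Tfin, Dcnt]
      · have he : Tfin 0 j = {![]} := by
          ext k
          simp only [Tfin, Finset.mem_filter, Fintype.mem_piFinset, Finset.mem_Icc,
            Finset.mem_singleton]
          constructor
          · intro _
            exact funext (fun i => Fin.elim0 i)
          · rintro rfl
            exact ⟨fun i => Fin.elim0 i, by simp; omega⟩
        rw [he, Dcnt]
        simp [Nat.pos_iff_ne_zero.1 hj]
  | succ d ih =>
      rw [Tfin_succ, Finset.card_biUnion, Dcnt]
      · refine Finset.sum_congr rfl fun a _ => ?_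
        rw [Finset.card_image_of_injective _
          (Fin.cons_right_injective (α := fun _ : Fin (d+1) => ℕ) a), ih]
      · intro a ha b hb hab
        simp only [Finset.disjoint_left, Finset.mem_image]
        rintro f ⟨t, _, rfl⟩ ⟨t', _, hf⟩
        have := congrFun hf 0
        simp only [Fin.cons_zero] at this
        exact hab this.symm

lemma ncard_eq_Dcnt (d j : ℕ) :
    Set.ncard {k : Fin d → ℕ | (∀ i, 1 ≤ k i) ∧ (∏ i, k i) ≤ j} = Dcnt d j := by
  rw [set_eq_Tfin, Set.ncard_coe_finset, Tfin_card]

lemma sumlog_est (m j : ℕ) (hj : 1 ≤ j) :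
    |(∑ k ∈ Finset.Icc 1 j, (Real.log j - Real.log k) ^ m / k) -
      (Real.log j) ^ (m+1) / (m+1)| ≤ (Real.log j) ^ m := by
  set g : ℝ → ℝ := fun t => (Real.log j - Real.log t) ^ m / t with hg_def
  have hj1 : (1:ℝ) ≤ (j:ℝ) := by exact_mod_cast hj
  have hlogj : 0 ≤ Real.log j := Real.log_nonneg hj1
  -- antitone
  have hg : AntitoneOn g (Set.Icc (1:ℝ) (j:ℝ)) := by
    intro s hs t ht hst
    have hs1 : (1:ℝ) ≤ s := hs.1
    have ht1 : (1:ℝ) ≤ t := ht.1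
    have h1 : Real.log t ≤ Real.log (j:ℝ) := Real.log_le_log (by linarith) ht.2
    have h2 : Real.log s ≤ Real.log t := Real.log_le_log (by linarith) hst
    refine div_le_div₀ (pow_nonneg (by linarith) m) ?_ (by linarith) hst
    exact pow_le_pow_left₀ (by linarith) (by linarith) m
  -- integrability
  have hgc : ContinuousOn g (Set.Icc (1:ℝ) (j:ℝ)) := by
    refine ContinuousOn.div ?_ continuousOn_id ?_
    · exact ((continuousOn_const.sub (Real.continuousOn_log.mono
        (fun t ht => by simp only [Set.mem_compl_iff, Set.mem_singleton_iff]
                        intro h; rw [h] at ht; linarith [ht.1]))).pow m)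
    · intro t ht; exact ne_of_gt (by linarith [ht.1] : (0:ℝ) < t)
  -- FTC
  have hFTC : ∫ x in (1:ℝ)..(j:ℝ), g x = (Real.log j) ^ (m+1) / (m+1) := by
    have huIcc : Set.uIcc (1:ℝ) (j:ℝ) = Set.Icc 1 (j:ℝ) := Set.uIcc_of_le hj1
    have key : ∀ t ∈ Set.uIcc (1:ℝ) (j:ℝ),
        HasDerivAt (fun t => (Real.log j - Real.log t) ^ (m+1) * (-(1/(m+1))))
          (g t) t := by
      intro t ht
      rw [huIcc] at ht
      have ht0 : (0:ℝ) < t := by linarith [ht.1]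
      have h1 : HasDerivAt (fun t => Real.log (j:ℝ) - Real.log t) (-t⁻¹) t :=
        (Real.hasDerivAt_log (ne_of_gt ht0)).const_sub _
      have h2 := (h1.pow (m+1)).mul_const (-(1/((m:ℝ)+1)))
      refine h2.congr_deriv ?_
      have : ((m:ℝ)+1) ≠ 0 := by positivity
      simp only [hg_def, Nat.add_sub_cancel, Nat.cast_add, Nat.cast_one]
      field_simp
    rw [intervalIntegral.integral_eq_sub_of_hasDerivAt key
      ((hgc.mono (by rw [huIcc])).intervalIntegrable)]
    rw [Real.log_one]
    have : Real.log (j:ℝ) - Real.log (j:ℝ) = 0 := by ring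
    rw [this]
    rw [zero_pow (Nat.succ_ne_zero m)]
    ring
  -- comparison
  have hlow : ∫ x in (1:ℝ)..(j:ℝ), g x ≤ ∑ k ∈ Finset.Ico 1 j, g k := by
    have := AntitoneOn.integral_le_sum_Ico hj (by exact_mod_cast hg)
    simpa using this
  have hup : ∑ k ∈ Finset.Ico 1 j, g ((k:ℕ)+1) ≤ ∫ x in (1:ℝ)..(j:ℝ), g x := by
    have := AntitoneOn.sum_le_integral_Ico hj (by exact_mod_cast hg)
    simpa using this
  have hsplit1 : ∑ k ∈ Finset.Icc 1 j, g k = ∑ k ∈ Finset.Ico 1 j, g k + g j := by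
    rw [← Finset.Ico_add_one_right_eq_Icc, Finset.sum_Ico_succ_top hj]
  have hsplit2 : ∑ k ∈ Finset.Icc 1 j, g k = g 1 + ∑ k ∈ Finset.Ico 1 j, g ((k:ℕ)+1) := by
    rw [← Finset.Ico_add_one_right_eq_Icc]
    rw [Finset.sum_eq_sum_Ico_succ_bot (by omega : 1 < j + 1)]
    have h2 : ∑ k ∈ Finset.Ico 1 j, g ((k:ℕ)+1) = ∑ k ∈ Finset.Ico 1 j, (fun k : ℕ => g k) (k + 1) := by
      apply Finset.sum_congr rfl
      intro k hk
      push_cast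
      ring_nf
    rw [h2, Finset.sum_Ico_add' (fun k : ℕ => g (k:ℝ)) 1 j 1]
    norm_num
  have hgj : 0 ≤ g j := by
    apply div_nonneg (pow_nonneg (by simp) m) (by positivity)
  have hg1 : g 1 = (Real.log j) ^ m := by
    simp [hg_def]
  rw [abs_le]
  constructor
  · have : (Real.log j) ^ (m+1) / (m+1) ≤ ∑ k ∈ Finset.Icc 1 j, g k := by
      rw [hsplit1, ← hFTC]
      linarith
    simp only [hg_def] at this ⊢
    linarith
  · have : ∑ k ∈ Finset.Icc 1 j, g k ≤ (Real.log j)^m + (Real.log j) ^ (m+1) / (m+1) := by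
      rw [hsplit2, ← hFTC, ← hg1]
      linarith
    simp only [hg_def] at this ⊢
    linarith

lemma harmonic_est (j : ℕ) (hj : 1 ≤ j) :
    |(∑ k ∈ Finset.Icc 1 j, (1:ℝ)/k) - Real.log j| ≤ 1 := by
  have := sumlog_est 0 j hj
  simpa using this

lemma harmonic_le (j : ℕ) (hj : 1 ≤ j) :
    (∑ k ∈ Finset.Icc 1 j, (1:ℝ)/k) ≤ 1 + Real.log j := by
  have := abs_le.1 (harmonic_est j hj)
  linarith [this.2]


lemma Dcnt_one (j : ℕ) : Dcnt 1 j = j := by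
  have h : ∀ k ∈ Finset.Icc 1 j, Dcnt 0 (j / k) = 1 := by
    intro k hk
    simp only [Finset.mem_Icc] at hk
    have h1 : 1 ≤ j / k := (Nat.one_le_div_iff (by omega)).2 hk.2
    rw [Dcnt]
    simp [Nat.one_le_iff_ne_zero.1 h1]
  rw [Dcnt, Finset.sum_congr rfl h, Finset.sum_const, Nat.card_Icc]
  simp

lemma log_nat_mono {a b : ℕ} (h : a ≤ b) : Real.log a ≤ Real.log b := by
  rcases Nat.eq_zero_or_pos a with rfl | ha
  · simp only [Nat.cast_zero, Real.log_zero]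
    exact Real.log_natCast_nonneg b
  · exact Real.log_le_log (by exact_mod_cast ha) (by exact_mod_cast h)

lemma nat_div_cast_le (j k : ℕ) : ((j / k : ℕ) : ℝ) ≤ (j:ℝ)/(k:ℝ) := Nat.cast_div_le

lemma nat_div_cast_gt (j k : ℕ) (hk : 1 ≤ k) : (j:ℝ)/(k:ℝ) - 1 < ((j / k : ℕ) : ℝ) := by
  have hk0 : (0:ℝ) < k := by exact_mod_cast hk
  have h : j < k * (j / k) + k := by
    conv_lhs => rw [← Nat.div_add_mod j k]
    have := Nat.mod_lt j (show 0 < k by omega)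
    omega
  have h' : (j:ℝ) < k * ((j / k : ℕ):ℝ) + k := by exact_mod_cast h
  rw [div_sub_one (ne_of_gt hk0), div_lt_iff₀ hk0]
  ring_nf
  ring_nf at h'
  linarith

lemma one_add_log_nonneg (j : ℕ) : 0 ≤ 1 + Real.log j := by
  have := Real.log_natCast_nonneg j
  linarith


lemma pow_sub_pow_le (p : ℕ) : ∀ {a b : ℝ}, 0 ≤ b → b ≤ a →
    a^(p+1) - b^(p+1) ≤ ((p:ℝ)+1) * a^p * (a-b) := by
  induction p with
  | zero => intro a b hb hba; norm_num
  | succ p ih =>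
      intro a b hb hba
      have h := ih hb hba
      have ha : 0 ≤ a := le_trans hb hba
      have hpow : b^(p+1) ≤ a^(p+1) := pow_le_pow_left₀ hb hba (p+1)
      calc a^(p+1+1) - b^(p+1+1)
          = a * (a^(p+1) - b^(p+1)) + (a - b) * b^(p+1) := by ring
        _ ≤ a * (((p:ℝ)+1) * a^p * (a-b)) + (a-b) * a^(p+1) := by
            apply add_le_add
            · exact mul_le_mul_of_nonneg_left h ha
            · exact mul_le_mul_of_nonneg_left hpow (by linarith)
        _ = (((p+1:ℕ):ℝ)+1) * a^(p+1) * (a-b) := by push_cast; ring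
  
lemma phi_diff (p : ℕ) {x y J : ℝ} (hy : 1 ≤ y) (hyx : y ≤ x) (hxy : x - y ≤ 1) (hxJ : x ≤ J) :
    |x * (Real.log x)^(p+1) - y * (Real.log y)^(p+1)| ≤
      (Real.log J)^(p+1) + ((p:ℝ)+1) * (Real.log J)^p := by
  have hx1 : 1 ≤ x := le_trans hy hyx
  have hJ1 : 1 ≤ J := le_trans hx1 hxJ
  have hlx : 0 ≤ Real.log x := Real.log_nonneg hx1
  have hly : 0 ≤ Real.log y := Real.log_nonneg hy
  have hlJ : 0 ≤ Real.log J := Real.log_nonneg hJ1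
  have hlxJ : Real.log x ≤ Real.log J := Real.log_le_log (by linarith) hxJ
  have hlyx : Real.log y ≤ Real.log x := Real.log_le_log (by linarith) hyx
  have hmono : y * (Real.log y)^(p+1) ≤ x * (Real.log x)^(p+1) :=
    mul_le_mul hyx (pow_le_pow_left₀ hly hlyx _) (pow_nonneg hly _) (by linarith)
  rw [abs_of_nonneg (by linarith)]
  have h1 : (x-y) * (Real.log x)^(p+1) ≤ (Real.log J)^(p+1) := by
    calc (x-y) * (Real.log x)^(p+1) ≤ 1 * (Real.log J)^(p+1) :=
          mul_le_mul hxy (pow_le_pow_left₀ hlx hlxJ _) (pow_nonneg hlx _) one_pos.le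
      _ = (Real.log J)^(p+1) := one_mul _
  have hsub : Real.log x - Real.log y ≤ 1/y := by
    have hy0 : (0:ℝ) < y := by linarith
    have hx0 : (0:ℝ) < x := by linarith
    have := Real.log_le_sub_one_of_pos (show (0:ℝ) < x/y by positivity)
    rw [Real.log_div (ne_of_gt hx0) (ne_of_gt hy0)] at this
    have hdiv : x/y - 1 ≤ 1/y := by
      rw [div_sub_one (ne_of_gt hy0), div_le_div_iff₀ hy0 hy0]
      nlinarith
    linarith
  have h2 : y * ((Real.log x)^(p+1) - (Real.log y)^(p+1)) ≤ ((p:ℝ)+1) * (Real.log J)^p := by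
    have hd := pow_sub_pow_le p hly hlyx
    have hy0 : (0:ℝ) < y := by linarith
    calc y * ((Real.log x)^(p+1) - (Real.log y)^(p+1))
        ≤ y * (((p:ℝ)+1) * (Real.log x)^p * (Real.log x - Real.log y)) :=
          mul_le_mul_of_nonneg_left hd (by linarith)
      _ ≤ y * (((p:ℝ)+1) * (Real.log J)^p * (1/y)) := by
          apply mul_le_mul_of_nonneg_left ?_ (le_of_lt hy0)
          apply mul_le_mul
          · apply mul_le_mul_of_nonneg_left (pow_le_pow_left₀ hlx hlxJ p) (by positivity)
          · exact hsub
          · linarith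
          · positivity
      _ = ((p:ℝ)+1) * (Real.log J)^p := by field_simp
  calc x * (Real.log x)^(p+1) - y * (Real.log y)^(p+1)
      = (x-y) * (Real.log x)^(p+1) + y * ((Real.log x)^(p+1) - (Real.log y)^(p+1)) := by ring
    _ ≤ (Real.log J)^(p+1) + ((p:ℝ)+1) * (Real.log J)^p := add_le_add h1 h2

lemma Dcnt_succ (d j : ℕ) : Dcnt (d+1) j = ∑ k ∈ Finset.Icc 1 j, Dcnt d (j / k) := rfl

lemma key_est (n : ℕ) : ∃ C : ℝ, 0 ≤ C ∧ ∀ j : ℕ, 1 ≤ j →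
    |(Dcnt (n+2) j : ℝ) - (j:ℝ) * (Real.log j)^(n+1) / (Nat.factorial (n+1))| ≤
      C * ((j:ℝ) * (1 + Real.log j)^n) := by
  induction n with
  | zero =>
      refine ⟨2, by norm_num, fun j hj => ?_⟩
      have hj1 : (1:ℝ) ≤ (j:ℝ) := by exact_mod_cast hj
      have hred : ∀ A B : ℝ, |A - B| ≤ 2 * (j:ℝ) → |A - B * (Real.log j)^(0+1) / (Nat.factorial (0+1)) * 1| ≤ 2 * (B * 1) → True := fun _ _ _ _ => trivial
      norm_num
      have hD : (Dcnt 2 j : ℝ) = ∑ k ∈ Finset.Icc 1 j, ((j/k : ℕ) : ℝ) := by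
        rw [show Dcnt 2 j = ∑ k ∈ Finset.Icc 1 j, (j/k) from by
          rw [Dcnt_succ]; exact Finset.sum_congr rfl fun k _ => Dcnt_one _]
        push_cast
        rfl
      have hsum : ∑ k ∈ Finset.Icc 1 j, ((j:ℝ)/k) = (j:ℝ) * ∑ k ∈ Finset.Icc 1 j, (1:ℝ)/k := by
        rw [Finset.mul_sum]
        exact Finset.sum_congr rfl fun k _ => (mul_one_div _ _).symm
      have h1 : |∑ k ∈ Finset.Icc 1 j, (((j/k : ℕ):ℝ) - (j:ℝ)/k)| ≤ (j:ℝ) := by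
        calc |∑ k ∈ Finset.Icc 1 j, (((j/k : ℕ):ℝ) - (j:ℝ)/k)|
            ≤ ∑ k ∈ Finset.Icc 1 j, |((j/k : ℕ):ℝ) - (j:ℝ)/k| := Finset.abs_sum_le_sum_abs _ _
          _ ≤ ∑ k ∈ Finset.Icc 1 j, 1 := by
              apply Finset.sum_le_sum
              intro k hk
              simp only [Finset.mem_Icc] at hk
              rw [abs_le]
              constructor
              · linarith [nat_div_cast_gt j k hk.1]
              · linarith [nat_div_cast_le j k]
          _ = (j:ℝ) := by simp
      have h2 : |(j:ℝ) * (∑ k ∈ Finset.Icc 1 j, (1:ℝ)/k) - (j:ℝ) * Real.log j| ≤ (j:ℝ) := by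
        rw [← mul_sub, abs_mul, abs_of_nonneg (by linarith : (0:ℝ) ≤ (j:ℝ))]
        calc (j:ℝ) * |(∑ k ∈ Finset.Icc 1 j, (1:ℝ)/k) - Real.log j| ≤ (j:ℝ) * 1 :=
              mul_le_mul_of_nonneg_left (harmonic_est j hj) (by linarith)
          _ = (j:ℝ) := mul_one _
      have key : (Dcnt 2 j:ℝ) - (j:ℝ) * Real.log j =
          (∑ k ∈ Finset.Icc 1 j, (((j/k : ℕ):ℝ) - (j:ℝ)/k)) +
          ((j:ℝ) * (∑ k ∈ Finset.Icc 1 j, (1:ℝ)/k) - (j:ℝ) * Real.log j) := by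
        rw [hD, Finset.sum_sub_distrib, hsum]
        ring
      calc |(Dcnt 2 j:ℝ) - (j:ℝ) * Real.log j|
          ≤ |∑ k ∈ Finset.Icc 1 j, (((j/k : ℕ):ℝ) - (j:ℝ)/k)| +
            |(j:ℝ) * (∑ k ∈ Finset.Icc 1 j, (1:ℝ)/k) - (j:ℝ) * Real.log j| := by
            rw [key]; exact abs_add_le _ _
        _ ≤ (j:ℝ) + (j:ℝ) := add_le_add h1 h2
        _ = 2 * (j:ℝ) := by ring
  | succ n ihn =>
      obtain ⟨C, hC0, hC⟩ := ihn
      refine ⟨C + ((n:ℝ) + 5), by positivity, fun j hj => ?_⟩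
      have hj1 : (1:ℝ) ≤ (j:ℝ) := by exact_mod_cast hj
      set L := Real.log j with hL_def
      have hL0 : 0 ≤ L := Real.log_nonneg hj1
      have hfac1 : (1:ℝ) ≤ (Nat.factorial (n+1) : ℝ) := by
        exact_mod_cast Nat.one_le_iff_ne_zero.2 (Nat.factorial_ne_zero (n+1))
      -- basic facts for k in range
      have hk_facts : ∀ k ∈ Finset.Icc 1 j, 1 ≤ k ∧ k ≤ j ∧ 1 ≤ j / k := by
        intro k hk
        simp only [Finset.mem_Icc] at hk
        exact ⟨hk.1, hk.2, (Nat.one_le_div_iff (by omega)).2 hk.2⟩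
      have hD : (Dcnt (n+3) j : ℝ) = ∑ k ∈ Finset.Icc 1 j, (Dcnt (n+2) (j/k) : ℝ) := by
        rw [show Dcnt (n+3) j = ∑ k ∈ Finset.Icc 1 j, Dcnt (n+2) (j/k) from Dcnt_succ _ _]
        push_cast
        rfl
      -- the three approximations
      set φ : ℕ → ℝ := fun k => ((j/k : ℕ):ℝ) * (Real.log ((j/k : ℕ):ℝ))^(n+1) /
        (Nat.factorial (n+1)) with hφ_def
      set ψ : ℕ → ℝ := fun k => ((j:ℝ)/k) * (Real.log ((j:ℝ)/k))^(n+1) /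
        (Nat.factorial (n+1)) with hψ_def
      -- Term A
      have hA : ∑ k ∈ Finset.Icc 1 j, |(Dcnt (n+2) (j/k) : ℝ) - φ k| ≤
          C * ((j:ℝ) * (1+L)^(n+1)) := by
        have step : ∀ k ∈ Finset.Icc 1 j, |(Dcnt (n+2) (j/k) : ℝ) - φ k| ≤
            (C * (1+L)^n) * ((j:ℝ)/k) := by
          intro k hk
          obtain ⟨hk1, hkj, hjk1⟩ := hk_facts k hk
          calc |(Dcnt (n+2) (j/k) : ℝ) - φ k| ≤ C * (((j/k:ℕ):ℝ) * (1 + Real.log ((j/k:ℕ):ℝ))^n) :=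
                hC (j/k) hjk1
            _ ≤ (C * (1+L)^n) * ((j:ℝ)/k) := by
                rw [mul_assoc]
                apply mul_le_mul_of_nonneg_left ?_ hC0
                rw [mul_comm ((1+L)^n) _]
                apply mul_le_mul (nat_div_cast_le j k)
                · apply pow_le_pow_left₀ (one_add_log_nonneg _)
                  have := log_nat_mono (Nat.div_le_self j k)
                  rw [hL_def]
                  linarith
                · exact pow_nonneg (one_add_log_nonneg _) n
                · positivity
        calc ∑ k ∈ Finset.Icc 1 j, |(Dcnt (n+2) (j/k) : ℝ) - φ k|
            ≤ ∑ k ∈ Finset.Icc 1 j, (C * (1+L)^n) * ((j:ℝ)/k) := Finset.sum_le_sum step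
          _ = (C * (1+L)^n) * ((j:ℝ) * ∑ k ∈ Finset.Icc 1 j, (1:ℝ)/k) := by
              rw [Finset.mul_sum, Finset.mul_sum]
              exact Finset.sum_congr rfl fun k _ => by ring
          _ ≤ (C * (1+L)^n) * ((j:ℝ) * (1 + L)) := by
              apply mul_le_mul_of_nonneg_left ?_ (by positivity)
              exact mul_le_mul_of_nonneg_left (harmonic_le j hj) (by linarith)
          _ = C * ((j:ℝ) * (1+L)^(n+1)) := by ring
      -- Term B
      have hB : ∑ k ∈ Finset.Icc 1 j, |φ k - ψ k| ≤
          ((n:ℝ)+2) * ((j:ℝ) * (1+L)^(n+1)) := by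
        have step : ∀ k ∈ Finset.Icc 1 j, |φ k - ψ k| ≤ ((n:ℝ)+2) * (1+L)^(n+1) := by
          intro k hk
          obtain ⟨hk1, hkj, hjk1⟩ := hk_facts k hk
          have hk0 : (0:ℝ) < k := by exact_mod_cast hk1
          have hy1 : (1:ℝ) ≤ ((j/k:ℕ):ℝ) := by exact_mod_cast hjk1
          have hyx : ((j/k:ℕ):ℝ) ≤ (j:ℝ)/k := nat_div_cast_le j k
          have hxy : (j:ℝ)/k - ((j/k:ℕ):ℝ) ≤ 1 := le_of_lt (by linarith [nat_div_cast_gt j k hk1])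
          have hxJ : (j:ℝ)/k ≤ (j:ℝ) := by
            rw [div_le_iff₀ hk0]
            nlinarith [hj1, (by exact_mod_cast hk1 : (1:ℝ) ≤ (k:ℝ))]
          have hpd := phi_diff n hy1 hyx (by linarith) hxJ
          have habs : |φ k - ψ k| =
              |((j/k:ℕ):ℝ) * (Real.log ((j/k:ℕ):ℝ))^(n+1) - ((j:ℝ)/k) * (Real.log ((j:ℝ)/k))^(n+1)| /
                (Nat.factorial (n+1)) := by
            rw [hφ_def, hψ_def]
            rw [div_sub_div_same, abs_div, abs_of_nonneg (by positivity : (0:ℝ) ≤ ((Nat.factorial (n+1):ℝ)))]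
          rw [habs, abs_sub_comm]
          calc |((j:ℝ)/k) * (Real.log ((j:ℝ)/k))^(n+1) - ((j/k:ℕ):ℝ) * (Real.log ((j/k:ℕ):ℝ))^(n+1)| /
                (Nat.factorial (n+1))
              ≤ |((j:ℝ)/k) * (Real.log ((j:ℝ)/k))^(n+1) - ((j/k:ℕ):ℝ) * (Real.log ((j/k:ℕ):ℝ))^(n+1)| := by
                apply div_le_self (abs_nonneg _) hfac1
            _ ≤ L^(n+1) + ((n:ℝ)+1) * L^n := hpd
            _ ≤ ((n:ℝ)+2) * (1+L)^(n+1) := by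
                have e1 : L^(n+1) ≤ (1+L)^(n+1) := pow_le_pow_left₀ hL0 (by linarith) _
                have e2 : L^n ≤ (1+L)^(n+1) := by
                  calc L^n ≤ (1+L)^n := pow_le_pow_left₀ hL0 (by linarith) _
                    _ ≤ (1+L)^(n+1) := pow_le_pow_right₀ (by linarith) (Nat.le_succ n)
                nlinarith [pow_nonneg hL0 n, pow_nonneg hL0 (n+1)]
        calc ∑ k ∈ Finset.Icc 1 j, |φ k - ψ k|
            ≤ ∑ k ∈ Finset.Icc 1 j, ((n:ℝ)+2) * (1+L)^(n+1) := Finset.sum_le_sum step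
          _ = (j:ℝ) * (((n:ℝ)+2) * (1+L)^(n+1)) := by
              rw [Finset.sum_const, Nat.card_Icc]
              simp [nsmul_eq_mul]
          _ = ((n:ℝ)+2) * ((j:ℝ) * (1+L)^(n+1)) := by ring
      -- Term C
      have hCterm : |(∑ k ∈ Finset.Icc 1 j, ψ k) - (j:ℝ) * L^(n+2) / (Nat.factorial (n+2))| ≤
          (j:ℝ) * (1+L)^(n+1) := by
        have hψ_eq : ∀ k ∈ Finset.Icc 1 j,
            ψ k = ((j:ℝ) / (Nat.factorial (n+1))) * ((L - Real.log k)^(n+1) / k) := by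
          intro k hk
          obtain ⟨hk1, hkj, _⟩ := hk_facts k hk
          have hk0 : (k:ℝ) ≠ 0 := by positivity
          have hj0 : (j:ℝ) ≠ 0 := by positivity
          rw [hψ_def]
          simp only
          rw [Real.log_div hj0 hk0]
          rw [hL_def]
          ring
        rw [Finset.sum_congr rfl hψ_eq, ← Finset.mul_sum]
        have hsl := sumlog_est (n+1) j hj
        rw [← hL_def] at hsl
        have hsl2 : |(∑ k ∈ Finset.Icc 1 j, (L - Real.log k)^(n+1)/k) - L^(n+2)/((n:ℝ)+2)| ≤ L^(n+1) := by
          have e : L^(n+2)/((n:ℝ)+2) = L^(n+1+1)/((((n+1):ℕ):ℝ)+1) := by push_cast; ring_nf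
          rw [e]; exact hsl
        have hfac : (Nat.factorial (n+2) : ℝ) = ((n:ℝ)+2) * (Nat.factorial (n+1) : ℝ) := by
          rw [Nat.factorial_succ]
          push_cast
          ring
        have heq : (j:ℝ) * L^(n+2) / (Nat.factorial (n+2)) =
            ((j:ℝ) / (Nat.factorial (n+1))) * (L^(n+2) / ((n:ℝ)+2)) := by
          have hne1 : ((Nat.factorial (n+1):ℝ)) ≠ 0 := by positivity
          have hne2 : ((n:ℝ)+2) ≠ 0 := by positivity
          rw [hfac, mul_comm ((n:ℝ)+2) _, ← div_div, div_mul_div_comm, div_div]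
        rw [heq, ← mul_sub, abs_mul]
        have habs1 : |(j:ℝ) / (Nat.factorial (n+1))| = (j:ℝ) / (Nat.factorial (n+1)) :=
          abs_of_nonneg (by positivity)
        rw [habs1]
        calc ((j:ℝ) / (Nat.factorial (n+1))) *
              |(∑ k ∈ Finset.Icc 1 j, (L - Real.log k)^(n+1) / k) - L^(n+2) / ((n:ℝ)+2)|
            ≤ ((j:ℝ) / (Nat.factorial (n+1))) * L^(n+1) := by
              apply mul_le_mul_of_nonneg_left hsl2 (by positivity)
          _ ≤ (j:ℝ) * (1+L)^(n+1) := by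
              apply mul_le_mul
              · exact div_le_self (by linarith) hfac1
              · exact pow_le_pow_left₀ hL0 (by linarith) _
              · positivity
              · linarith
      -- combine
      have tri : (Dcnt (n+3) j : ℝ) - (j:ℝ) * L^(n+2) / (Nat.factorial (n+2)) =
          (∑ k ∈ Finset.Icc 1 j, ((Dcnt (n+2) (j/k) : ℝ) - φ k)) +
          (∑ k ∈ Finset.Icc 1 j, (φ k - ψ k)) +
          ((∑ k ∈ Finset.Icc 1 j, ψ k) - (j:ℝ) * L^(n+2) / (Nat.factorial (n+2))) := by
        rw [hD, Finset.sum_sub_distrib, Finset.sum_sub_distrib]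
        ring
      calc |(Dcnt (n+3) j : ℝ) - (j:ℝ) * L^(n+2) / (Nat.factorial (n+2))|
          ≤ |∑ k ∈ Finset.Icc 1 j, ((Dcnt (n+2) (j/k) : ℝ) - φ k)| +
            |∑ k ∈ Finset.Icc 1 j, (φ k - ψ k)| +
            |(∑ k ∈ Finset.Icc 1 j, ψ k) - (j:ℝ) * L^(n+2) / (Nat.factorial (n+2))| := by
            rw [tri]
            exact (abs_add_le _ _).trans (add_le_add (abs_add_le _ _) le_rfl)
        _ ≤ C * ((j:ℝ) * (1+L)^(n+1)) + ((n:ℝ)+2) * ((j:ℝ) * (1+L)^(n+1)) +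
            (j:ℝ) * (1+L)^(n+1) := by
            apply add_le_add (add_le_add ?_ ?_) hCterm
            · exact (Finset.abs_sum_le_sum_abs _ _).trans hA
            · exact (Finset.abs_sum_le_sum_abs _ _).trans hB
        _ ≤ (C + (((n:ℕ):ℝ) + 5)) * ((j:ℝ) * (1+L)^(n+1)) := by
            have h0 : (0:ℝ) ≤ (j:ℝ) * (1+L)^(n+1) := by positivity
            nlinarith

theorem stmt_4 (d : ℕ) (hd : 1 ≤ d)
    (M : ℕ → ℕ)
    (hM : ∀ j : ℕ, M j =
      Set.ncard {k : Fin d → ℕ | (∀ i, 1 ≤ k i) ∧ (∏ i, k i) ≤ j}) :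
    Tendsto (fun j : ℕ => (M j : ℝ) / ((j : ℝ) * (Real.log j) ^ (d - 1)))
      atTop (nhds (1 / (Nat.factorial (d - 1) : ℝ))) := by
  have hM' : ∀ j, M j = Dcnt d j := fun j => (hM j).trans (ncard_eq_Dcnt d j)
  match d, hd with
  | 1, _ =>
      have hev : (fun j : ℕ => (M j : ℝ) / ((j : ℝ) * (Real.log j) ^ (1 - 1))) =ᶠ[atTop]
          (fun _ : ℕ => (1:ℝ)) := by
        filter_upwards [eventually_ge_atTop 1] with j hj
        have hj0 : (0:ℝ) < (j:ℝ) := by exact_mod_cast hj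
        rw [hM' j, Dcnt_one]
        simp [div_self (ne_of_gt hj0)]
      rw [show (1:ℝ) / (Nat.factorial (1-1) : ℝ) = 1 by norm_num]
      exact Tendsto.congr' hev.symm tendsto_const_nhds
  | (n+2), _ =>
      obtain ⟨C, hC0, hC⟩ := key_est n
      have hfac0 : (0:ℝ) < (Nat.factorial (n+1) : ℝ) := by
        exact_mod_cast Nat.factorial_pos (n+1)
      have hmain : Tendsto (fun j : ℕ => (M j : ℝ) / ((j : ℝ) * (Real.log j) ^ (n+1)) -
          1 / (Nat.factorial (n+1) : ℝ)) atTop (nhds 0) := by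
        apply squeeze_zero_norm' (a := fun j : ℕ => C * 2^n / Real.log j)
        · filter_upwards [eventually_ge_atTop 3] with j hj
          have hj1 : (1:ℝ) ≤ (j:ℝ) := by exact_mod_cast le_trans (by norm_num) hj
          have hj3 : (3:ℝ) ≤ (j:ℝ) := by exact_mod_cast hj
          have hℓ : (1:ℝ) ≤ Real.log j := by
            rw [Real.le_log_iff_exp_le (by linarith)]
            exact le_trans (le_trans Real.exp_one_lt_d9.le (by norm_num)) hj3
          set ℓ := Real.log j with hℓ_def
          have hℓ0 : (0:ℝ) < ℓ := by linarith
          have hden : (0:ℝ) < (j:ℝ) * ℓ^(n+1) := by positivity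
          have hFc : (M j : ℝ) / ((j : ℝ) * ℓ ^ (n+1)) - 1 / (Nat.factorial (n+1) : ℝ) =
              ((Dcnt (n+2) j : ℝ) - (j:ℝ) * ℓ^(n+1) / (Nat.factorial (n+1))) /
              ((j:ℝ) * ℓ^(n+1)) := by
            rw [hM' j]
            rw [div_sub_div _ _ (ne_of_gt hden) (ne_of_gt hfac0), div_eq_div_iff
              (by positivity) (ne_of_gt hden)]
            field_simp
          rw [Real.norm_eq_abs, hFc, abs_div, abs_of_pos hden]
          have hnum := hC j (by omega)
          rw [← hℓ_def] at hnum
          calc |(Dcnt (n+2) j : ℝ) - (j:ℝ) * ℓ^(n+1) / (Nat.factorial (n+1))| / ((j:ℝ) * ℓ^(n+1))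
              ≤ (C * ((j:ℝ) * (1 + ℓ)^n)) / ((j:ℝ) * ℓ^(n+1)) := by
                gcongr
            _ ≤ (C * ((j:ℝ) * (2*ℓ)^n)) / ((j:ℝ) * ℓ^(n+1)) := by
                gcongr
                linarith
            _ = C * 2^n / ℓ := by
                rw [mul_pow]
                field_simp
                ring
        · apply Tendsto.div_atTop tendsto_const_nhds
          exact Real.tendsto_log_atTop.comp tendsto_natCast_atTop_atTop
      have h2 := hmain.add_const (1 / (Nat.factorial (n+1) : ℝ))
      simp only [sub_add_cancel, zero_add] at h2
      exact h2
end

section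
/- Let d ≥ 1, κ ≥ 1, θ > 0, and η ∈ ℝ. The series Σ_{i≥2} d(⌊i^κ (log i)^η⌋) / (i^{κθ} (log i)^{ηθ}) converges if θ > 1/κ and diverges if θ < 1/κ, where d(j) counts points in Z_+^d with coordinate product j. -/
open Filter Real

lemma divisor_bound (ε : ℝ) (hε : 0 < ε) :
    ∃ C : ℝ, 1 ≤ C ∧ ∀ n : ℕ, 1 ≤ n → (n.divisors.card : ℝ) ≤ C * (n : ℝ) ^ ε := by
  have hlog2 : (0:ℝ) < Real.log 2 := Real.log_pos (by norm_num)
  set B : ℝ := 1 + 1 / (ε * Real.log 2) with hB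
  have hB1 : 1 ≤ B := le_add_of_nonneg_right (by positivity)
  set P : ℕ := ⌈(2:ℝ) ^ (1/ε)⌉₊ with hP
  refine ⟨B ^ (P + 1), one_le_pow₀ hB1, fun n hn => ?_⟩
  have hn0 : n ≠ 0 := by omega
  -- key prime-power inequality
  have key : ∀ p ∈ n.primeFactors,
      ((n.factorization p + 1 : ℕ) : ℝ) ≤
        (if p ≤ P then B else 1) * ((p : ℝ) ^ (n.factorization p : ℕ)) ^ ε := by
    intro p hp
    have hpp : p.Prime := Nat.prime_of_mem_primeFactors hp
    have hp2 : (2:ℝ) ≤ (p:ℝ) := by exact_mod_cast hpp.two_le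
    set a : ℕ := n.factorization p with ha
    have hppos : (0:ℝ) < p := by linarith
    have hrw : ((p : ℝ) ^ a) ^ ε = ((p:ℝ) ^ ε) ^ a := by
      rw [← Real.rpow_natCast (p:ℝ) a, ← Real.rpow_natCast ((p:ℝ) ^ ε) a,
        ← Real.rpow_mul hppos.le, ← Real.rpow_mul hppos.le, mul_comm]
    rw [hrw]
    by_cases hcase : p ≤ P
    · simp only [hcase, if_true]
      have h2e : (2:ℝ) ^ ε ≤ (p:ℝ) ^ ε := Real.rpow_le_rpow (by norm_num) hp2 hε.le
      have hexp : 1 + (a:ℝ) * (ε * Real.log 2) ≤ ((2:ℝ) ^ ε) ^ a := by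
        have : ((2:ℝ) ^ ε) ^ a = Real.exp ((a:ℝ) * (ε * Real.log 2)) := by
          rw [← Real.rpow_natCast ((2:ℝ)^ε) a, ← Real.rpow_mul (by norm_num),
            Real.rpow_def_of_pos (by norm_num)]
          exact congrArg Real.exp (by ring)
        rw [this]
        have := Real.add_one_le_exp ((a:ℝ) * (ε * Real.log 2))
        linarith
      have hBa : ((a:ℕ):ℝ) + 1 ≤ B * ((2:ℝ) ^ ε) ^ a := by
        have h1 : (1:ℝ) ≤ ((2:ℝ)^ε)^a := one_le_pow₀ (Real.one_le_rpow (by norm_num) hε.le)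
        have h2 : (a:ℝ) ≤ (1 / (ε * Real.log 2)) * ((2:ℝ)^ε)^a := by
          rw [div_mul_eq_mul_div, le_div_iff₀ (by positivity)]
          nlinarith [hexp]
        calc ((a:ℕ):ℝ) + 1 ≤ (1 / (ε * Real.log 2)) * ((2:ℝ)^ε)^a + 1 * ((2:ℝ)^ε)^a := by
              push_cast; linarith
          _ = B * ((2:ℝ)^ε)^a := by ring
      calc ((a + 1 : ℕ) : ℝ) = ((a:ℕ):ℝ) + 1 := by push_cast; ring
        _ ≤ B * ((2:ℝ)^ε)^a := hBa
        _ ≤ B * ((p:ℝ)^ε)^a := by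
            have := pow_le_pow_left₀ (by positivity : (0:ℝ) ≤ (2:ℝ)^ε) h2e a
            nlinarith [this, hB1]
    · simp only [hcase, if_false, one_mul]
      push_neg at hcase
      have hpP : (2:ℝ) ^ (1/ε) < (p:ℝ) := by
        calc (2:ℝ) ^ (1/ε) ≤ (P:ℝ) := Nat.le_ceil _
          _ < (p:ℝ) := by exact_mod_cast hcase
      have h2p : (2:ℝ) ≤ (p:ℝ) ^ ε := by
        have := Real.rpow_le_rpow (by positivity) hpP.le hε.le
        rwa [← Real.rpow_mul (by norm_num), one_div_mul_cancel hε.ne', Real.rpow_one] at this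
      calc ((a + 1 : ℕ) : ℝ) ≤ (2:ℝ) ^ a := by
            exact_mod_cast Nat.succ_le_of_lt (Nat.lt_two_pow_self (n := a))
        _ ≤ ((p:ℝ)^ε) ^ a := pow_le_pow_left₀ (by norm_num) h2p a
  have hprod : ∏ p ∈ n.primeFactors, ((p:ℝ) ^ (n.factorization p : ℕ)) = (n:ℝ) := by
    calc ∏ p ∈ n.primeFactors, ((p:ℝ) ^ (n.factorization p : ℕ))
        = ((∏ p ∈ n.primeFactors, p ^ (n.factorization p : ℕ) : ℕ) : ℝ) := by push_cast; rfl
      _ = (n:ℝ) := by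
          rw [← Nat.support_factorization]
          exact_mod_cast Nat.factorization_prod_pow_eq_self hn0
  have hite : (∏ p ∈ n.primeFactors, (if p ≤ P then B else 1)) ≤ B ^ (P+1) := by
    rw [Finset.prod_ite, Finset.prod_const, Finset.prod_const_one, mul_one]
    have hsub : (n.primeFactors.filter (· ≤ P)) ⊆ Finset.range (P+1) := by
      intro x hx
      simp only [Finset.mem_filter, Finset.mem_range] at hx ⊢
      omega
    exact pow_le_pow_right₀ hB1 (by simpa using Finset.card_le_card hsub)
  calc (n.divisors.card : ℝ)
      = ∏ p ∈ n.primeFactors, ((n.factorization p + 1 : ℕ) : ℝ) := by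
        rw [Nat.card_divisors hn0]; push_cast; rfl
    _ ≤ ∏ p ∈ n.primeFactors, (if p ≤ P then B else 1) * ((p:ℝ) ^ (n.factorization p : ℕ)) ^ ε :=
        Finset.prod_le_prod (fun p _ => by positivity) key
    _ = (∏ p ∈ n.primeFactors, (if p ≤ P then B else 1)) *
        ∏ p ∈ n.primeFactors, ((p:ℝ) ^ (n.factorization p : ℕ)) ^ ε := Finset.prod_mul_distrib
    _ ≤ B ^ (P+1) * (n:ℝ) ^ ε := by
        rw [Real.finset_prod_rpow _ _ (fun p _ => by positivity) ε, hprod]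
        have h2 : (0:ℝ) ≤ (n:ℝ) ^ ε := by positivity
        have h3 : (0:ℝ) ≤ ∏ p ∈ n.primeFactors, (if p ≤ P then B else 1) :=
          Finset.prod_nonneg (fun p _ => by split <;> [linarith; norm_num])
        nlinarith [hite]

lemma dc_set_finite (d j : ℕ) (hj : 1 ≤ j) :
    {k : Fin d → ℕ | (∀ i, 1 ≤ k i) ∧ (∏ i, k i) = j} ⊆
      ↑(Fintype.piFinset fun _ : Fin d => j.divisors) := by
  rintro k ⟨h1, h2⟩
  simp only [Finset.coe_sort_coe, Finset.mem_coe, Fintype.mem_piFinset]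
  intro i
  rw [Nat.mem_divisors]
  exact ⟨h2 ▸ Finset.dvd_prod_of_mem _ (Finset.mem_univ i), by omega⟩

lemma dc_card_le (d j : ℕ) (hj : 1 ≤ j) :
    Set.ncard {k : Fin d → ℕ | (∀ i, 1 ≤ k i) ∧ (∏ i, k i) = j} ≤ j.divisors.card ^ d := by
  have h := Set.ncard_le_ncard (dc_set_finite d j hj) (Finset.finite_toSet _)
  rwa [Set.ncard_coe_finset, Fintype.card_piFinset, Finset.prod_const, Finset.card_univ,
    Fintype.card_fin] at h

lemma dc_card_zero (d : ℕ) :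
    Set.ncard {k : Fin d → ℕ | (∀ i, 1 ≤ k i) ∧ (∏ i, k i) = 0} = 0 := by
  have he : {k : Fin d → ℕ | (∀ i, 1 ≤ k i) ∧ (∏ i, k i) = 0} = ∅ := by
    ext k
    simp only [Set.mem_setOf_eq, Set.mem_empty_iff_false, iff_false, not_and]
    intro h1 h2
    obtain ⟨i, -, hi⟩ := Finset.prod_eq_zero_iff.mp h2
    exact absurd hi (by have := h1 i; omega)
  rw [he, Set.ncard_empty]

lemma dc_card_pos (d j : ℕ) (hd : 1 ≤ d) (hj : 1 ≤ j) :
    0 < Set.ncard {k : Fin d → ℕ | (∀ i, 1 ≤ k i) ∧ (∏ i, k i) = j} := by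
  have hfin : {k : Fin d → ℕ | (∀ i, 1 ≤ k i) ∧ (∏ i, k i) = j}.Finite :=
    Set.Finite.subset (Finset.finite_toSet _) (dc_set_finite d j hj)
  rw [Set.ncard_pos hfin]
  refine ⟨fun i => if i = ⟨0, hd⟩ then j else 1, fun i => ?_, ?_⟩
  · dsimp only
    split <;> omega
  · simp [Finset.prod_ite_eq' Finset.univ (⟨0, hd⟩ : Fin d) (fun _ => j)]

lemma ev_log_rpow (c r : ℝ) (hr : 0 < r) :
    ∀ᶠ x : ℝ in atTop, Real.log x ^ c ≤ x ^ r := by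
  have h := (isLittleO_log_rpow_rpow_atTop c hr).def one_pos
  filter_upwards [h, eventually_ge_atTop (1:ℝ)] with x hx hx1
  have hlog : 0 ≤ Real.log x := Real.log_nonneg hx1
  have hx0 : (0:ℝ) ≤ x := by linarith
  rw [Real.norm_eq_abs, Real.norm_eq_abs, abs_of_nonneg (Real.rpow_nonneg hlog c),
    abs_of_nonneg (Real.rpow_nonneg hx0 r), one_mul] at hx
  exact hx

theorem stmt_8 (d : ℕ) (hd : 1 ≤ d) (κ θ η : ℝ) (hκ : 1 ≤ κ) (hθ : 0 < θ)
    (dc : ℕ → ℕ)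
    (hdc : ∀ j : ℕ, dc j =
      Set.ncard {k : Fin d → ℕ | (∀ i, 1 ≤ k i) ∧ (∏ i, k i) = j}) :
    (θ > 1 / κ → Summable (fun i : ℕ =>
        if 2 ≤ i then
          (dc ⌊(i : ℝ) ^ κ * (Real.log i) ^ η⌋₊ : ℝ) /
            ((i : ℝ) ^ (κ * θ) * (Real.log i) ^ (η * θ))
        else 0)) ∧
    (θ < 1 / κ → ¬ Summable (fun i : ℕ =>
        if 2 ≤ i then
          (dc ⌊(i : ℝ) ^ κ * (Real.log i) ^ η⌋₊ : ℝ) /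
            ((i : ℝ) ^ (κ * θ) * (Real.log i) ^ (η * θ))
        else 0)) := by
  have hκ0 : (0:ℝ) < κ := by linarith
  have hd0 : (0:ℝ) < (d:ℝ) := by exact_mod_cast hd
  constructor
  · intro hgt
    have hκθ : 1 < κ * θ := by
      rw [gt_iff_lt, div_lt_iff₀ hκ0] at hgt
      linarith [hgt]
    set ε : ℝ := (κ*θ - 1)/(2*(d:ℝ)*κ) with hεdef
    have hε : 0 < ε := div_pos (by linarith) (by positivity)
    obtain ⟨C, hC1, hC⟩ := divisor_bound ε hε
    have hdε : κ * (ε * (d:ℝ)) = (κ*θ - 1)/2 := by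
      rw [hεdef]; field_simp
    set δ : ℝ := (κ*θ - 1)/4 with hδdef
    set s' : ℝ := (κ*θ + 3)/4 with hs'def
    have hδ0 : 0 < δ := by rw [hδdef]; linarith
    have hs'1 : 1 < s' := by rw [hs'def]; linarith
    apply summable_of_isBigO_nat (g := fun i : ℕ => (i:ℝ)^(-s'))
      (Real.summable_nat_rpow.mpr (by linarith))
    rw [Asymptotics.isBigO_iff]
    refine ⟨C^d, ?_⟩
    have hev := tendsto_natCast_atTop_atTop.eventually (ev_log_rpow (η*(ε*(d:ℝ) - θ)) δ hδ0)
    filter_upwards [eventually_ge_atTop 2, hev] with i hi2 hlog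
    have hi1 : (1:ℝ) < (i:ℝ) := by exact_mod_cast (by omega : 1 < i)
    have hipos : (0:ℝ) < (i:ℝ) := by linarith
    have hlogpos : 0 < Real.log i := Real.log_pos hi1
    set x : ℝ := (i:ℝ)^κ * (Real.log i)^η with hx
    have hxpos : 0 < x := mul_pos (Real.rpow_pos_of_pos hipos κ) (Real.rpow_pos_of_pos hlogpos η)
    have hden : (i:ℝ)^(κ*θ) * (Real.log i)^(η*θ) = x^θ := by
      rw [hx, Real.mul_rpow (Real.rpow_nonneg hipos.le κ) (Real.rpow_nonneg hlogpos.le η),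
        ← Real.rpow_mul hipos.le, ← Real.rpow_mul hlogpos.le]
    set m : ℕ := ⌊x⌋₊ with hm
    have key : (dc m : ℝ) / x^θ ≤ C^d * (i:ℝ)^(-s') := by
      rcases Nat.eq_zero_or_pos m with hm0 | hm1
      · rw [hm0, hdc 0, dc_card_zero]
        simp only [Nat.cast_zero, zero_div]
        positivity
      · have h1 : (dc m : ℝ) ≤ ((m.divisors.card : ℝ))^d := by
          rw [hdc m]; exact_mod_cast dc_card_le d m hm1
        have h3 : (dc m : ℝ) ≤ (C * (m:ℝ)^ε)^d :=
          le_trans h1 (pow_le_pow_left₀ (by positivity) (hC m hm1) d)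
        have h4 : (C * (m:ℝ)^ε)^d = C^d * (m:ℝ)^(ε*(d:ℝ)) := by
          rw [mul_pow, ← Real.rpow_natCast ((m:ℝ)^ε) d, ← Real.rpow_mul (Nat.cast_nonneg m)]
        have h6 : (m:ℝ)^(ε*(d:ℝ)) ≤ x^(ε*(d:ℝ)) :=
          Real.rpow_le_rpow (Nat.cast_nonneg m) (Nat.floor_le hxpos.le) (by positivity)
        have hnum : (dc m : ℝ) ≤ C^d * x^(ε*(d:ℝ)) := by
          calc (dc m : ℝ) ≤ C^d * (m:ℝ)^(ε*(d:ℝ)) := by rw [← h4]; exact h3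
            _ ≤ C^d * x^(ε*(d:ℝ)) :=
                mul_le_mul_of_nonneg_left h6 (by positivity)
        have h7 : (dc m : ℝ)/x^θ ≤ C^d * x^(ε*(d:ℝ)) / x^θ := by
          rw [div_eq_mul_inv, div_eq_mul_inv]
          exact mul_le_mul_of_nonneg_right hnum
            (inv_nonneg.mpr (Real.rpow_nonneg hxpos.le θ))
        refine h7.trans ?_
        rw [mul_div_assoc, ← Real.rpow_sub hxpos, hx,
          Real.mul_rpow (Real.rpow_nonneg hipos.le κ) (Real.rpow_nonneg hlogpos.le η),
          ← Real.rpow_mul hipos.le, ← Real.rpow_mul hlogpos.le]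
        have hexp : κ * (ε*(d:ℝ) - θ) = -(s' + δ) := by
          have h9 : κ * (ε*(d:ℝ) - θ) = κ * (ε*(d:ℝ)) - κ*θ := by ring
          rw [h9, hdε, hs'def, hδdef]; ring
        rw [hexp, ← mul_assoc]
        calc C^d * (i:ℝ)^(-(s'+δ)) * (Real.log i)^(η*(ε*(d:ℝ) - θ))
            ≤ C^d * (i:ℝ)^(-(s'+δ)) * (i:ℝ)^δ := by
              exact mul_le_mul_of_nonneg_left hlog (by positivity)
          _ = C^d * (i:ℝ)^(-s') := by
              rw [mul_assoc, ← Real.rpow_add hipos]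
              ring_nf
    rw [if_pos hi2, hden]
    rw [Real.norm_of_nonneg (by positivity), Real.norm_of_nonneg (Real.rpow_nonneg hipos.le _)]
    exact key
  · intro hlt hsum
    have hκθ : κ*θ < 1 := by
      rw [lt_div_iff₀ hκ0] at hlt; linarith
    set δ : ℝ := (1 - κ*θ)/2 with hδdef
    have hδ0 : 0 < δ := by rw [hδdef]; linarith
    have hg : Summable (fun i : ℕ => (i:ℝ)^(-(κ*θ+δ))) := by
      apply summable_of_isBigO_nat hsum
      rw [Asymptotics.isBigO_iff]
      refine ⟨1, ?_⟩
      have hev1 := tendsto_natCast_atTop_atTop.eventually (ev_log_rpow (-η) (κ/2) (by linarith))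
      have hev2 := tendsto_natCast_atTop_atTop.eventually (ev_log_rpow (η*θ) δ hδ0)
      filter_upwards [eventually_ge_atTop 2, hev1, hev2] with i hi2 he1 he2
      have hi1 : (1:ℝ) < (i:ℝ) := by exact_mod_cast (by omega : 1 < i)
      have hipos : (0:ℝ) < (i:ℝ) := by linarith
      have hlogpos : 0 < Real.log i := Real.log_pos hi1
      set x : ℝ := (i:ℝ)^κ * (Real.log i)^η with hx
      have hxpos : 0 < x :=
        mul_pos (Real.rpow_pos_of_pos hipos κ) (Real.rpow_pos_of_pos hlogpos η)
      have hden : (i:ℝ)^(κ*θ) * (Real.log i)^(η*θ) = x^θ := by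
        rw [hx, Real.mul_rpow (Real.rpow_nonneg hipos.le κ) (Real.rpow_nonneg hlogpos.le η),
          ← Real.rpow_mul hipos.le, ← Real.rpow_mul hlogpos.le]
      have hlogη : (i:ℝ)^(-(κ/2)) ≤ (Real.log i)^η := by
        rw [Real.rpow_neg hipos.le,
          show (Real.log i)^η = ((Real.log i)^(-η))⁻¹ by
            rw [← Real.rpow_neg hlogpos.le, neg_neg]]
        exact inv_anti₀ (Real.rpow_pos_of_pos hlogpos (-η)) he1
      have hx1 : (1:ℝ) ≤ x := by
        have h1 : (i:ℝ)^κ * (i:ℝ)^(-(κ/2)) ≤ x :=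
          mul_le_mul_of_nonneg_left hlogη (Real.rpow_nonneg hipos.le κ)
        have h2 : (i:ℝ)^κ * (i:ℝ)^(-(κ/2)) = (i:ℝ)^(κ/2) := by
          rw [← Real.rpow_add hipos]; ring_nf
        have h3 : (1:ℝ) ≤ (i:ℝ)^(κ/2) := Real.one_le_rpow hi1.le (by linarith)
        linarith
      have hm1 : 1 ≤ ⌊x⌋₊ := Nat.le_floor (by exact_mod_cast hx1)
      have hdc1 : (1:ℝ) ≤ (dc ⌊x⌋₊ : ℝ) := by
        rw [hdc]; exact_mod_cast dc_card_pos d _ hd hm1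
      have hxθ : x^θ ≤ (i:ℝ)^(κ*θ+δ) := by
        rw [← hden, Real.rpow_add hipos]
        exact mul_le_mul_of_nonneg_left he2 (Real.rpow_nonneg hipos.le _)
      rw [if_pos hi2, hden]
      have hθx : 0 < x^θ := Real.rpow_pos_of_pos hxpos θ
      rw [Real.norm_of_nonneg (Real.rpow_nonneg hipos.le _),
        Real.norm_of_nonneg (div_nonneg (Nat.cast_nonneg _) hθx.le), one_mul]
      rw [Real.rpow_neg hipos.le]
      calc ((i:ℝ)^(κ*θ+δ))⁻¹ ≤ (x^θ)⁻¹ := inv_anti₀ hθx hxθ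
        _ ≤ (dc ⌊x⌋₊ : ℝ) / x^θ := by
            rw [div_eq_mul_inv]
            nth_rewrite 1 [← one_mul (x^θ)⁻¹]
            exact mul_le_mul_of_nonneg_right hdc1 (inv_nonneg.mpr hθx.le)
    have hcon := Real.summable_nat_rpow.mp hg
    rw [hδdef] at hcon
    linarith
end

section
/- Let {X_k : k ∈ Z_+^d} be independent real random variables with mean 0 and finite variances, and S_n = Σ_{k ≤ n} X_k. Then P(max_{k ≤ n} S_k > x) ≤ 2^d P(S_n > x - d·√(2 Var(S_n))) for all x ∈ ℝ. -/
open MeasureTheory ProbabilityTheory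

section Aux
variable {Ω : Type*} [MeasurableSpace Ω] {μ : Measure Ω}

/-- Chebyshev-type bound. -/
lemma chebyshev_half [IsProbabilityMeasure μ] {Y : Ω → ℝ} (hY : MemLp Y 2 μ)
    (hm : ∫ ω, Y ω ∂μ = 0) {v : ℝ} (hv : variance Y μ ≤ v) :
    μ {ω | Y ω < -Real.sqrt (2 * v)} ≤ 1 / 2 := by
  have h0 : 0 ≤ v := le_trans (variance_nonneg Y μ) hv
  have hm' : μ[Y] = 0 := hm
  rcases h0.lt_or_eq with h | h
  · have hc : 0 < Real.sqrt (2 * v) := Real.sqrt_pos.2 (by linarith)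
    have hsub : {ω | Y ω < -Real.sqrt (2 * v)} ⊆
        {ω | Real.sqrt (2 * v) ≤ |Y ω - μ[Y]|} := by
      intro ω hω
      simp only [Set.mem_setOf_eq] at *
      rw [hm', sub_zero]
      calc Real.sqrt (2 * v) ≤ -(Y ω) := by linarith
        _ ≤ |Y ω| := neg_le_abs _
    calc μ {ω | Y ω < -Real.sqrt (2 * v)} ≤ μ {ω | Real.sqrt (2 * v) ≤ |Y ω - μ[Y]|} :=
          measure_mono hsub
      _ ≤ ENNReal.ofReal (variance Y μ / Real.sqrt (2 * v) ^ 2) :=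
          meas_ge_le_variance_div_sq hY hc
      _ ≤ ENNReal.ofReal (1 / 2) := by
          apply ENNReal.ofReal_le_ofReal
          rw [Real.sq_sqrt (by linarith)]
          rw [div_le_div_iff₀ (by linarith) (by norm_num)]
          linarith
      _ = 1 / 2 := by
          rw [ENNReal.ofReal_div_of_pos (by norm_num)]
          norm_num
  · -- v = 0, variance is zero
    have hvar : variance Y μ = 0 := le_antisymm (h ▸ hv) (variance_nonneg Y μ)
    have : μ {ω | Y ω < -Real.sqrt (2 * v)} = 0 := by
      rw [← h, mul_zero, Real.sqrt_zero, neg_zero]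
      have hsub : {ω | Y ω < 0} ⊆ ⋃ i : ℕ, {ω | (1 : ℝ) / (i + 1) ≤ |Y ω - μ[Y]|} := by
        intro ω hω
        simp only [Set.mem_setOf_eq, Set.mem_iUnion] at *
        rw [hm', sub_zero]
        obtain ⟨i, hi⟩ := exists_nat_one_div_lt (abs_pos.2 (ne_of_lt hω))
        exact ⟨i, by push_cast at hi ⊢; linarith⟩
      refine le_antisymm (le_trans (measure_mono hsub) ?_) zero_le
      rw [measure_iUnion_null_iff.2 fun i => ?_]
      refine le_antisymm (le_trans (meas_ge_le_variance_div_sq hY (by positivity)) ?_) zero_le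
      rw [hvar]
      simp
    rw [this]; exact zero_le

end Aux

/-- Indices `k` with `1 ≤ k ≤ n` whose coordinates `≥ r` are pinned to `n`. -/
def Iset {d : ℕ} (n : Fin d → ℕ) (r : ℕ) : Finset (Fin d → ℕ) :=
  (Finset.Icc (fun _ => 1) n).filter (fun k => ∀ i : Fin d, r ≤ (i : ℕ) → k i = n i)

lemma Iset_zero {d : ℕ} (n : Fin d → ℕ) (hn : (fun _ => 1 : Fin d → ℕ) ≤ n) :
    Iset n 0 = {n} := by
  ext k
  simp only [Iset, Finset.mem_filter, Finset.mem_Icc, Finset.mem_singleton]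
  constructor
  · rintro ⟨-, h⟩
    exact funext fun i => h i (Nat.zero_le _)
  · rintro rfl
    exact ⟨⟨hn, le_refl _⟩, fun i _ => rfl⟩

lemma Iset_top {d : ℕ} (n : Fin d → ℕ) :
    Iset n d = Finset.Icc (fun _ => 1) n := by
  ext k
  simp only [Iset, Finset.mem_filter, and_iff_left_iff_imp]
  exact fun _ i hi => absurd i.isLt (not_lt.2 hi)

lemma step_lemma {Ω : Type*} [MeasurableSpace Ω] (μ : Measure Ω) [IsProbabilityMeasure μ]
    {d : ℕ} (X : (Fin d → ℕ) → Ω → ℝ) (hmeas : ∀ k, Measurable (X k))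
    (hindep : iIndepFun (m := fun _ => (inferInstance : MeasurableSpace ℝ)) X μ)
    (hL2 : ∀ k, MemLp (X k) 2 μ) (hmean : ∀ k, ∫ ω, X k ω ∂μ = 0)
    (n : Fin d → ℕ) (hn : (fun _ => 1 : Fin d → ℕ) ≤ n) {r : ℕ} (hr : r < d) (y : ℝ) :
    μ {ω | ∃ k ∈ Iset n (r + 1), y < ∑ k' ∈ Finset.Icc (fun _ => 1) k, X k' ω} ≤
      2 * μ {ω | ∃ k ∈ Iset n r,
        y - Real.sqrt (2 * variance (fun ω => ∑ k' ∈ Finset.Icc (fun _ => 1) n, X k' ω) μ)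
          < ∑ k' ∈ Finset.Icc (fun _ => 1) k, X k' ω} := by
  classical
  set T : (Fin d → ℕ) → Ω → ℝ := fun k ω => ∑ k' ∈ Finset.Icc (fun _ => 1) k, X k' ω with hT
  set c : ℝ := Real.sqrt (2 * variance (T n) μ) with hc
  have hTmeas : ∀ k, Measurable (T k) := fun k => Finset.measurable_sum _ fun k' _ => hmeas k'
  set rr : Fin d := ⟨r, hr⟩ with hrr
  set J : Finset (Fin d → ℕ) := Iset n (r + 1) with hJ
  set κ : (Fin d → ℕ) → ℕ := fun k => k rr * (J.card + 1) + J.toList.idxOf k with hκ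
  have hidx : ∀ a, J.toList.idxOf a ≤ J.card := by
    intro a
    have := List.idxOf_le_length (a := a) (l := J.toList)
    rwa [Finset.length_toList] at this
  have hκlt : ∀ a ∈ J, ∀ b : Fin d → ℕ, a rr < b rr → κ a < κ b := by
    intro a _ b hab
    have h1 : (a rr + 1) * (J.card + 1) ≤ b rr * (J.card + 1) :=
      Nat.mul_le_mul_right _ (by omega)
    have h2 : a rr * (J.card + 1) + (J.card + 1) = (a rr + 1) * (J.card + 1) := by ring
    have h3 := hidx a
    simp only [hκ]
    linarith
  have κmono : ∀ a ∈ J, ∀ b ∈ J, κ a < κ b → a rr ≤ b rr := by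
    intro a ha b hb hab
    by_contra hcon
    push_neg at hcon
    exact absurd (hκlt b hb a hcon) (not_lt.2 (le_of_lt hab))
  have κinjJ : ∀ a ∈ J, ∀ b ∈ J, κ a = κ b → a = b := by
    intro a ha b hb hab
    rcases lt_trichotomy (a rr) (b rr) with h | h | h
    · exact absurd (hκlt a ha b h) (by omega)
    · have : J.toList.idxOf a = J.toList.idxOf b := by
        simp only [hκ, h] at hab
        omega
      exact (List.idxOf_inj (Finset.mem_toList.2 ha)).1 this
    · exact absurd (hκlt b hb a h) (by omega)
  -- membership facts
  have hJmem : ∀ m ∈ J, ((fun _ => 1 : Fin d → ℕ) ≤ m ∧ m ≤ n) ∧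
      ∀ i : Fin d, r + 1 ≤ (i : ℕ) → m i = n i := by
    intro m hm
    simpa [hJ, Iset, Finset.mem_filter, Finset.mem_Icc] using hm
  -- basic defs per m
  set mup : (Fin d → ℕ) → (Fin d → ℕ) := fun m => Function.update m rr (n rr) with hmup
  set Fm : (Fin d → ℕ) → Finset (Fin d → ℕ) := fun m =>
    Finset.Icc (fun _ => 1) (mup m) \ Finset.Icc (fun _ => 1) m with hFm
  set Df : (Fin d → ℕ) → Ω → ℝ := fun m => ∑ k ∈ Fm m, X k with hDf
  set Em : (Fin d → ℕ) → Finset (Fin d → ℕ) := fun m =>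
    (Finset.Icc (fun _ => 1) n).filter (fun k => k rr ≤ m rr) with hEm
  set B : (Fin d → ℕ) → Set Ω := fun m =>
    {ω | y < T m ω} ∩ ⋂ m' ∈ J.filter (fun m' => κ m' < κ m), {ω | T m' ω ≤ y} with hB
  set C : (Fin d → ℕ) → Set Ω := fun m => {ω | -c ≤ Df m ω} with hC
  have hDfapp : ∀ m ω, Df m ω = ∑ k ∈ Fm m, X k ω := by
    intro m ω; simp [hDf]
  have hDfmeas : ∀ m, Measurable (Df m) := by
    intro m
    have : Df m = fun ω => ∑ k ∈ Fm m, X k ω := funext fun ω => hDfapp m ω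
    rw [this]
    exact Finset.measurable_sum _ fun k _ => hmeas k
  have hBmeas : ∀ m, MeasurableSet (B m) := by
    intro m
    refine (measurableSet_lt measurable_const (hTmeas m)).inter ?_
    refine MeasurableSet.biInter (Finset.countable_toSet _) fun m' _ => ?_
    exact measurableSet_le (hTmeas m') measurable_const
  have hCmeas : ∀ m, MeasurableSet (C m) := fun m =>
    measurableSet_le measurable_const (hDfmeas m)
  -- structural facts for m ∈ J
  have hmle : ∀ m ∈ J, m ≤ mup m := by
    intro m hm i
    by_cases hi : i = rr
    · subst hi
      simp only [hmup, Function.update_self]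
      exact (hJmem m hm).1.2 _
    · simp only [hmup, Function.update_of_ne hi]
      exact le_refl _
  have hmupn : ∀ m ∈ J, mup m ≤ n := by
    intro m hm i
    by_cases hi : i = rr
    · subst hi
      simp only [hmup, Function.update_self]
      exact le_refl _
    · simp only [hmup, Function.update_of_ne hi]
      exact (hJmem m hm).1.2 _
  have hmup1 : ∀ m ∈ J, (fun _ => 1 : Fin d → ℕ) ≤ mup m := by
    intro m hm i
    exact le_trans ((hJmem m hm).1.1 i) (hmle m hm i)
  have hmupJ : ∀ m ∈ J, mup m ∈ Iset n r := by
    intro m hm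
    simp only [Iset, Finset.mem_filter, Finset.mem_Icc]
    refine ⟨⟨hmup1 m hm, hmupn m hm⟩, fun i hi => ?_⟩
    by_cases hirr : i = rr
    · subst hirr
      simp only [hmup, Function.update_self]
    · simp only [hmup, Function.update_of_ne hirr]
      have : (i : ℕ) ≠ r := fun h => hirr (Fin.ext h)
      exact (hJmem m hm).2 i (by omega)
  have hTsplit : ∀ m ∈ J, ∀ ω, T (mup m) ω = T m ω + Df m ω := by
    intro m hm ω
    have hsub : Finset.Icc (fun _ => 1 : Fin d → ℕ) m ⊆
        Finset.Icc (fun _ => 1) (mup m) := Finset.Icc_subset_Icc_right (hmle m hm)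
    rw [hDfapp]
    simp only [hT, hFm]
    rw [add_comm, Finset.sum_sdiff hsub]
  -- Chebyshev bound
  have hFsub : ∀ m ∈ J, Fm m ⊆ Finset.Icc (fun _ => 1) n := by
    intro m hm k hk
    simp only [hFm, Finset.mem_sdiff, Finset.mem_Icc] at hk
    exact Finset.mem_Icc.2 ⟨hk.1.1, le_trans hk.1.2 (hmupn m hm)⟩
  have hvarT : variance (T n) μ = ∑ k ∈ Finset.Icc (fun _ => 1) n, variance (X k) μ := by
    have hTn : T n = ∑ k ∈ Finset.Icc (fun _ => 1 : Fin d → ℕ) n, X k := by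
      funext ω; simp [hT]
    rw [hTn]
    exact IndepFun.variance_sum (fun k _ => hL2 k) fun a _ b _ hab => hindep.indepFun hab
  have hvarD : ∀ m ∈ J, variance (Df m) μ ≤ variance (T n) μ := by
    intro m hm
    have e1 : variance (Df m) μ = ∑ k ∈ Fm m, variance (X k) μ := by
      rw [hDf]
      exact IndepFun.variance_sum (fun k _ => hL2 k) fun a _ b _ hab => hindep.indepFun hab
    rw [e1, hvarT]
    exact Finset.sum_le_sum_of_subset_of_nonneg (hFsub m hm)
      fun k _ _ => variance_nonneg _ _
  have hChalf : ∀ m ∈ J, μ (C m)ᶜ ≤ 1 / 2 := by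
    intro m hm
    have hcompl : (C m)ᶜ = {ω | Df m ω < -c} := by
      ext ω
      simp [hC, not_le]
    rw [hcompl, hc]
    have h0 : ∫ ω, Df m ω ∂μ = 0 := by
      simp only [hDfapp]
      rw [integral_finset_sum _ fun k _ => (hL2 k).integrable one_le_two]
      simp [hmean]
    exact chebyshev_half (memLp_finset_sum' _ fun k _ => hL2 k) h0 (hvarD m hm)
  have hCge : ∀ m ∈ J, 2⁻¹ ≤ μ (C m) := by
    intro m hm
    have h2 : μ (C m) = 1 - μ (C m)ᶜ := by
      rw [← compl_compl (C m), prob_compl_eq_one_sub (hCmeas m).compl, compl_compl]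
    rw [h2]
    calc (2 : ENNReal)⁻¹ = 1 - 1 / 2 := by
          rw [one_div, ENNReal.one_sub_inv_two]
      _ ≤ 1 - μ (C m)ᶜ := tsub_le_tsub_left (hChalf m hm) 1
  -- independence
  have hkey : ∀ m ∈ J, μ (B m ∩ C m) = μ (B m) * μ (C m) := by
    intro m hm
    -- Em and Fm are disjoint
    have hEF : Disjoint (Em m) (Fm m) := by
      rw [Finset.disjoint_left]
      intro k hkE hkF
      simp only [hEm, Finset.mem_filter, Finset.mem_Icc] at hkE
      simp only [hFm, Finset.mem_sdiff, Finset.mem_Icc] at hkF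
      have hklem : ∀ i : Fin d, i ≠ rr → k i ≤ m i := by
        intro i hi
        have := hkF.1.2 i
        simp only [hmup, Function.update_of_ne hi] at this
        exact this
      have hrrk : m rr < k rr := by
        by_contra hcon
        push_neg at hcon
        refine hkF.2 ⟨hkF.1.1, fun i => ?_⟩
        by_cases hi : i = rr
        · subst hi; exact hcon
        · exact hklem i hi
      exact absurd hkE.2 (not_le.2 hrrk)
    have hIndep1 : IndepFun (fun ω (k : (Em m : Finset (Fin d → ℕ))) => X k ω)
        (fun ω (k : (Fm m : Finset (Fin d → ℕ))) => X k ω) μ :=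
      hindep.indepFun_finset (Em m) (Fm m) hEF hmeas
    -- D as composition
    have hgsum : Measurable (fun v : {x // x ∈ Fm m} → ℝ => ∑ k, v k) :=
      Finset.measurable_sum _ fun k _ => measurable_pi_apply k
    have hIndepD : IndepFun (fun ω (k : {x // x ∈ Em m}) => X k ω) (Df m) μ := by
      have hcomp : Df m = (fun v : {x // x ∈ Fm m} → ℝ => ∑ k, v k) ∘
          (fun ω (k : {x // x ∈ Fm m}) => X k ω) := by
        funext ω
        rw [hDfapp]
        exact (Finset.sum_coe_sort (Fm m) (fun k => X k ω)).symm
      rw [hcomp]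
      exact hIndep1.comp measurable_id hgsum
    -- the G functionals
    set G : (Fin d → ℕ) → ({x // x ∈ Em m} → ℝ) → ℝ := fun m'' v =>
      ∑ k : {x // x ∈ Em m},
        if (k : Fin d → ℕ) ∈ Finset.Icc (fun _ => 1) m'' then v k else 0 with hG
    have hGmeas : ∀ m'', Measurable (G m'') := by
      intro m''
      apply Finset.measurable_sum
      intro k _
      by_cases hk : (k : Fin d → ℕ) ∈ Finset.Icc (fun _ => 1 : Fin d → ℕ) m''
      · simpa [hk] using measurable_pi_apply k
      · simpa [hk] using measurable_const
    have hGeq : ∀ m'' ∈ J, m'' rr ≤ m rr → ∀ ω : Ω,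
        G m'' (fun k => X k ω) = T m'' ω := by
      intro m'' hm'' hle ω
      have hsubE : Finset.Icc (fun _ => 1 : Fin d → ℕ) m'' ⊆ Em m := by
        intro k hk
        rw [Finset.mem_Icc] at hk
        obtain ⟨⟨h1, h2⟩, -⟩ := hJmem m'' hm''
        simp only [hEm, Finset.mem_filter, Finset.mem_Icc]
        exact ⟨⟨hk.1, le_trans hk.2 h2⟩, le_trans (hk.2 rr) hle⟩
      calc G m'' (fun k => X k ω)
          = ∑ k ∈ Em m, if k ∈ Finset.Icc (fun _ => 1) m'' then X k ω else 0 := by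
            rw [hG]
            exact Finset.sum_coe_sort (Em m)
              (fun k => if k ∈ Finset.Icc (fun _ => 1) m'' then X k ω else 0)
        _ = ∑ k ∈ (Em m).filter (fun k => k ∈ Finset.Icc (fun _ => 1) m''), X k ω :=
            (Finset.sum_filter _ _).symm
        _ = T m'' ω := by
            rw [Finset.filter_mem_eq_inter, Finset.inter_eq_right.2 hsubE]
    -- B as a preimage
    set P : Set ({x // x ∈ Em m} → ℝ) :=
      {v | y < G m v} ∩ ⋂ m' ∈ J.filter (fun m' => κ m' < κ m), {v | G m' v ≤ y} with hP
    have hPmeas : MeasurableSet P := by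
      refine (measurableSet_lt measurable_const (hGmeas m)).inter ?_
      exact MeasurableSet.biInter (Finset.countable_toSet _) fun m' _ =>
        measurableSet_le (hGmeas m') measurable_const
    have hBP : B m = (fun ω (k : {x // x ∈ Em m}) => X k ω) ⁻¹' P := by
      ext ω
      simp only [hB, hP, Set.mem_inter_iff, Set.mem_setOf_eq, Set.mem_preimage,
        Set.mem_iInter]
      constructor
      · rintro ⟨h1, h2⟩
        refine ⟨?_, fun m' hm' => ?_⟩
        · rw [hGeq m hm le_rfl]; exact h1
        · rw [hGeq m' (Finset.mem_filter.1 hm').1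
            (κmono m' (Finset.mem_filter.1 hm').1 m hm (Finset.mem_filter.1 hm').2)]
          exact h2 m' hm'
      · rintro ⟨h1, h2⟩
        refine ⟨?_, fun m' hm' => ?_⟩
        · rw [← hGeq m hm le_rfl ω]; exact h1
        · rw [← hGeq m' (Finset.mem_filter.1 hm').1
            (κmono m' (Finset.mem_filter.1 hm').1 m hm (Finset.mem_filter.1 hm').2) ω]
          exact h2 m' hm'
    have hCP : C m = Df m ⁻¹' Set.Ici (-c) := by
      ext ω
      simp [hC, Set.mem_Ici]
    rw [hBP, hCP]
    exact hIndepD.measure_inter_preimage_eq_mul _ _ hPmeas measurableSet_Ici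
  -- covering
  have hcover : {ω | ∃ k ∈ J, y < T k ω} = ⋃ m ∈ J, B m := by
    ext ω
    simp only [Set.mem_setOf_eq, Set.mem_iUnion]
    constructor
    · rintro ⟨k0, hk0, hy0⟩
      obtain ⟨mm, hmm, hmin⟩ := Finset.exists_min_image
        (J.filter fun k => y < T k ω) κ ⟨k0, Finset.mem_filter.2 ⟨hk0, hy0⟩⟩
      rw [Finset.mem_filter] at hmm
      refine ⟨mm, hmm.1, hmm.2, ?_⟩
      refine Set.mem_iInter₂.2 fun m' hm' => ?_
      rw [Finset.mem_filter] at hm'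
      by_contra hcon
      have hcon' : y < T m' ω := by
        simpa [not_le] using hcon
      have hmem : m' ∈ J.filter fun k => y < T k ω := Finset.mem_filter.2 ⟨hm'.1, hcon'⟩
      exact absurd hm'.2 (not_lt.2 (hmin m' hmem))
    · rintro ⟨mm, hmm, h1, -⟩
      exact ⟨mm, hmm, h1⟩
  have hBdisj : ∀ a ∈ J, ∀ b ∈ J, a ≠ b → Disjoint (B a) (B b) := by
    have key : ∀ a ∈ J, ∀ b ∈ J, κ a < κ b → Disjoint (B a) (B b) := by
      intro a ha b hb hab
      rw [Set.disjoint_left]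
      rintro ω ⟨ha1, -⟩ ⟨-, hb2⟩
      have : T a ω ≤ y :=
        Set.mem_iInter₂.1 hb2 a (Finset.mem_filter.2 ⟨ha, hab⟩)
      exact absurd ha1 (not_lt.2 this)
    intro a ha b hb hab
    rcases lt_trichotomy (κ a) (κ b) with h | h | h
    · exact key a ha b hb h
    · exact absurd (κinjJ a ha b hb h) hab
    · exact (key b hb a ha h).symm
  have hdisj : (↑J : Set (Fin d → ℕ)).PairwiseDisjoint (fun m => B m ∩ C m) := by
    intro a ha b hb hab
    exact Disjoint.mono Set.inter_subset_left Set.inter_subset_left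
      (hBdisj a (Finset.mem_coe.1 ha) b (Finset.mem_coe.1 hb) hab)
  have hsub : ∀ m ∈ J, B m ∩ C m ⊆ {ω | ∃ k ∈ Iset n r, y - c < T k ω} := by
    intro m hm ω hω
    obtain ⟨hωB, hωC⟩ := hω
    refine ⟨mup m, hmupJ m hm, ?_⟩
    have hsplit := hTsplit m hm ω
    have h1 : y < T m ω := hωB.1
    have h2 : -c ≤ Df m ω := hωC
    rw [hsplit]
    linarith
  have hBC : ∀ m ∈ J, μ (B m) ≤ 2 * μ (B m ∩ C m) := by
    intro m hm
    calc μ (B m) = 2 * 2⁻¹ * μ (B m) := by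
          rw [ENNReal.mul_inv_cancel (by norm_num) (by norm_num), one_mul]
      _ = 2 * (μ (B m) * 2⁻¹) := by ring
      _ ≤ 2 * (μ (B m) * μ (C m)) := by gcongr; exact hCge m hm
      _ = 2 * μ (B m ∩ C m) := by rw [hkey m hm]
  calc μ {ω | ∃ k ∈ J, y < T k ω} = μ (⋃ m ∈ J, B m) := by rw [hcover]
    _ ≤ ∑ m ∈ J, μ (B m) := measure_biUnion_finset_le _ _
    _ ≤ ∑ m ∈ J, 2 * μ (B m ∩ C m) := Finset.sum_le_sum hBC
    _ = 2 * ∑ m ∈ J, μ (B m ∩ C m) := by rw [Finset.mul_sum]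
    _ = 2 * μ (⋃ m ∈ J, (B m ∩ C m)) := by
        rw [measure_biUnion_finset hdisj fun m hm => (hBmeas m).inter (hCmeas m)]
    _ ≤ 2 * μ {ω | ∃ k ∈ Iset n r, y - c < T k ω} := by
        gcongr
        exact Set.iUnion₂_subset hsub

lemma iter_lemma {Ω : Type*} [MeasurableSpace Ω] (μ : Measure Ω) [IsProbabilityMeasure μ]
    {d : ℕ} (X : (Fin d → ℕ) → Ω → ℝ) (hmeas : ∀ k, Measurable (X k))
    (hindep : iIndepFun (m := fun _ => (inferInstance : MeasurableSpace ℝ)) X μ)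
    (hL2 : ∀ k, MemLp (X k) 2 μ) (hmean : ∀ k, ∫ ω, X k ω ∂μ = 0)
    (n : Fin d → ℕ) (hn : (fun _ => 1 : Fin d → ℕ) ≤ n) (r : ℕ) (hr : r ≤ d) (y : ℝ) :
    μ {ω | ∃ k ∈ Iset n r, y < ∑ k' ∈ Finset.Icc (fun _ => 1) k, X k' ω} ≤
      2 ^ r * μ {ω | ∃ k ∈ Iset n 0,
        y - r * Real.sqrt (2 * variance (fun ω => ∑ k' ∈ Finset.Icc (fun _ => 1) n, X k' ω) μ)
          < ∑ k' ∈ Finset.Icc (fun _ => 1) k, X k' ω} := by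
  set c := Real.sqrt (2 * variance (fun ω => ∑ k' ∈ Finset.Icc (fun _ => 1) n, X k' ω) μ) with hc
  induction r generalizing y with
  | zero => simp
  | succ r ih =>
      have hr' : r < d := hr
      calc μ {ω | ∃ k ∈ Iset n (r + 1), y < ∑ k' ∈ Finset.Icc (fun _ => 1) k, X k' ω}
          ≤ 2 * μ {ω | ∃ k ∈ Iset n r, y - c < ∑ k' ∈ Finset.Icc (fun _ => 1) k, X k' ω} :=
            step_lemma μ X hmeas hindep hL2 hmean n hn hr' y
        _ ≤ 2 * (2 ^ r * μ {ω | ∃ k ∈ Iset n 0,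
              (y - c) - r * c < ∑ k' ∈ Finset.Icc (fun _ => 1) k, X k' ω}) := by
            exact mul_le_mul_right (ih (le_of_lt hr') (y - c)) 2
        _ = 2 ^ (r + 1) * μ {ω | ∃ k ∈ Iset n 0,
              y - (r + 1 : ℕ) * c < ∑ k' ∈ Finset.Icc (fun _ => 1) k, X k' ω} := by
            have : (y - c) - (r : ℝ) * c = y - ((r + 1 : ℕ) : ℝ) * c := by push_cast; ring
            rw [this, pow_succ]
            ring

theorem stmt_11 (d : ℕ) (hd : 1 ≤ d)
    {Ω : Type*} [MeasurableSpace Ω] (μ : Measure Ω) [IsProbabilityMeasure μ]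
    (X : (Fin d → ℕ) → Ω → ℝ)
    (hmeas : ∀ k, Measurable (X k))
    (hindep : ProbabilityTheory.iIndepFun (m := fun _ => (inferInstance : MeasurableSpace ℝ)) X μ)
    (hL2 : ∀ k, MemLp (X k) 2 μ)
    (hmean : ∀ k, ∫ ω, X k ω ∂μ = 0)
    (S : (Fin d → ℕ) → Ω → ℝ)
    (hS : ∀ n ω, S n ω = ∑ k ∈ Finset.Icc (fun _ => 1) n, X k ω)
    (n : Fin d → ℕ) (hn : (fun _ => 1) ≤ n)
    (hne : (Finset.Icc (fun _ => 1 : Fin d → ℕ) n).Nonempty)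
    (x : ℝ) :
    μ {ω | (Finset.Icc (fun _ => 1 : Fin d → ℕ) n).sup' hne (fun k => S k ω) > x} ≤
      2 ^ d * μ {ω | S n ω > x - d * Real.sqrt (2 * variance (S n) μ)} := by
  have hSf : S n = fun ω => ∑ k ∈ Finset.Icc (fun _ => 1) n, X k ω :=
    funext fun ω => hS n ω
  have h1 : {ω | (Finset.Icc (fun _ => 1 : Fin d → ℕ) n).sup' hne (fun k => S k ω) > x}
      = {ω | ∃ k ∈ Iset n d, x < ∑ k' ∈ Finset.Icc (fun _ => 1) k, X k' ω} := by
    ext ω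
    simp only [Set.mem_setOf_eq, gt_iff_lt, Finset.lt_sup'_iff, Iset_top, hS]
  have h2 : {ω | S n ω > x - d * Real.sqrt (2 * variance (S n) μ)}
      = {ω | ∃ k ∈ Iset n 0,
          x - d * Real.sqrt (2 * variance (fun ω => ∑ k' ∈ Finset.Icc (fun _ => 1) n, X k' ω) μ)
            < ∑ k' ∈ Finset.Icc (fun _ => 1) k, X k' ω} := by
    ext ω
    simp only [Set.mem_setOf_eq, gt_iff_lt, Iset_zero n hn, Finset.mem_singleton,
      exists_eq_left, hS, hSf]
  rw [h1, h2]
  exact iter_lemma μ X hmeas hindep hL2 hmean n hn d le_rfl x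
end

section
/- Suppose U_n, a_n, b_n are sequences of real random variables resp. positive reals with a_n → ∞, b_n → ∞, U_n/b_n → μ almost surely, and limsup_n a_n(U_n/b_n - μ) = 1 and liminf_n a_n(U_n/b_n - μ) = -1 almost surely. If g : ℝ → ℝ is continuously differentiable in a neighbourhood of μ with g'(μ) ≠ 0, then almost surely limsup_n a_n (g(U_n/b_n) - g(μ)) = |g'(μ)| and liminf_n a_n (g(U_n/b_n) - g(μ)) = -|g'(μ)|. -/
open MeasureTheory Filter

lemma aux_bdd_above {u : ℕ → ℝ} (h : limsup u atTop ≠ 0) :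
    IsBoundedUnder (· ≤ ·) atTop u := by
  by_contra hb
  apply h
  rw [limsup_eq]
  convert Real.sInf_empty using 2
  · rfl
  ext x
  simp only [Set.mem_setOf_eq, Set.mem_empty_iff_false, iff_false]
  intro hx
  exact hb ⟨x, by simpa using hx⟩

lemma aux_bdd_below {u : ℕ → ℝ} (h : liminf u atTop ≠ 0) :
    IsBoundedUnder (· ≥ ·) atTop u := by
  by_contra hb
  apply h
  rw [liminf_eq]
  convert Real.sSup_empty using 2
  · rfl
  ext x
  simp only [Set.mem_setOf_eq, Set.mem_empty_iff_false, iff_false]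
  intro hx
  exact hb ⟨x, by simpa using hx⟩

lemma aux_key (c : ℝ) (hc : c ≠ 0) (y z : ℕ → ℝ)
    (hsup : limsup y atTop = 1) (hinf : liminf y atTop = -1)
    (hz : Tendsto (fun n => z n - c * y n) atTop (nhds 0)) :
    limsup z atTop = |c| ∧ liminf z atTop = -|c| := by
  have hA : IsBoundedUnder (· ≤ ·) atTop y := aux_bdd_above (hsup ▸ one_ne_zero)
  have hB : IsBoundedUnder (· ≥ ·) atTop y := aux_bdd_below (by rw [hinf]; norm_num)
  have hcA : IsCoboundedUnder (· ≤ ·) atTop y := hB.isCoboundedUnder_le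
  have hcB : IsCoboundedUnder (· ≥ ·) atTop y := hA.isCoboundedUnder_ge
  set w : ℕ → ℝ := fun n => z n - c * y n with hw
  have hwsup : limsup w atTop = 0 := hz.limsup_eq
  have hwinf : liminf w atTop = 0 := hz.liminf_eq
  -- limsup and liminf of c * y
  have hcyA : IsBoundedUnder (· ≤ ·) atTop (fun n => c * y n) := by
    rcases lt_or_gt_of_ne hc with h | h
    · obtain ⟨M, hM⟩ := hB
      exact ⟨c * M, eventually_map.2 <| (eventually_map.1 hM).mono fun n hn =>
        mul_le_mul_of_nonpos_left hn h.le⟩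
    · obtain ⟨M, hM⟩ := hA
      exact ⟨c * M, eventually_map.2 <| (eventually_map.1 hM).mono fun n hn =>
        mul_le_mul_of_nonneg_left hn h.le⟩
  have hcyB : IsBoundedUnder (· ≥ ·) atTop (fun n => c * y n) := by
    rcases lt_or_gt_of_ne hc with h | h
    · obtain ⟨M, hM⟩ := hA
      exact ⟨c * M, eventually_map.2 <| (eventually_map.1 hM).mono fun n hn =>
        mul_le_mul_of_nonpos_left hn h.le⟩
    · obtain ⟨M, hM⟩ := hB
      exact ⟨c * M, eventually_map.2 <| (eventually_map.1 hM).mono fun n hn =>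
        mul_le_mul_of_nonneg_left hn h.le⟩
  have hcysup : limsup (fun n => c * y n) atTop = |c| := by
    rcases lt_or_gt_of_ne hc with h | h
    · have := Antitone.map_liminf_of_continuousAt (f := fun x => c * x)
        (fun u v huv => mul_le_mul_of_nonpos_left huv h.le) y
        (continuous_const.mul continuous_id).continuousAt hcB hB
      rw [hinf] at this
      simp only [Function.comp_def] at this
      rw [← this]
      simp [abs_of_neg h]
    · have := Monotone.map_limsup_of_continuousAt (f := fun x => c * x)
        (fun u v huv => mul_le_mul_of_nonneg_left huv h.le) y
        (continuous_const.mul continuous_id).continuousAt hA hcA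
      rw [hsup] at this
      simp only [Function.comp_def] at this
      rw [← this]
      simp [abs_of_pos h]
  have hcyinf : liminf (fun n => c * y n) atTop = -|c| := by
    rcases lt_or_gt_of_ne hc with h | h
    · have := Antitone.map_limsup_of_continuousAt (f := fun x => c * x)
        (fun u v huv => mul_le_mul_of_nonpos_left huv h.le) y
        (continuous_const.mul continuous_id).continuousAt hA hcA
      rw [hsup] at this
      simp only [Function.comp_def] at this
      rw [← this]
      simp [abs_of_neg h]
    · have := Monotone.map_liminf_of_continuousAt (f := fun x => c * x)
        (fun u v huv => mul_le_mul_of_nonneg_left huv h.le) y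
        (continuous_const.mul continuous_id).continuousAt hcB hB
      rw [hinf] at this
      simp only [Function.comp_def] at this
      rw [← this]
      simp [abs_of_pos h]
  have hzw : z = w + fun n => c * y n := by funext n; simp [hw]
  have hwA : IsBoundedUnder (· ≤ ·) atTop w := hz.isBoundedUnder_le
  have hwB : IsBoundedUnder (· ≥ ·) atTop w := hz.isBoundedUnder_ge
  constructor
  · apply le_antisymm
    · calc limsup z atTop = limsup (w + fun n => c * y n) atTop := by rw [← hzw]
        _ ≤ limsup w atTop + limsup (fun n => c * y n) atTop :=
            limsup_add_le hwB hwA hcyB.isCoboundedUnder_le hcyA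
        _ = |c| := by rw [hwsup, zero_add, hcysup]
    · calc (|c| : ℝ) = limsup (fun n => c * y n) atTop + liminf w atTop := by
            rw [hcysup, hwinf, add_zero]
        _ ≤ limsup ((fun n => c * y n) + w) atTop := le_limsup_add hcyA hcyB.isCoboundedUnder_le hwA hwB
        _ = limsup z atTop := by rw [hzw, add_comm w]
  · apply le_antisymm
    · calc liminf z atTop = liminf (w + fun n => c * y n) atTop := by rw [← hzw]
        _ ≤ limsup w atTop + liminf (fun n => c * y n) atTop :=
            liminf_add_le hwB hwA hcyB hcyA.isCoboundedUnder_ge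
        _ = -|c| := by rw [hwsup, zero_add, hcyinf]
    · calc (-|c| : ℝ) = liminf w atTop + liminf (fun n => c * y n) atTop := by
            rw [hwinf, zero_add, hcyinf]
        _ ≤ liminf (w + fun n => c * y n) atTop := le_liminf_add hwB hwA hcyB hcyA.isCoboundedUnder_ge
        _ = liminf z atTop := by rw [← hzw]

theorem stmt_15 {Ω : Type*} [MeasurableSpace Ω] (μ : Measure Ω) [IsProbabilityMeasure μ]
    (U : ℕ → Ω → ℝ) (a b : ℕ → ℝ)
    (ha_pos : ∀ n, 0 < a n) (hb_pos : ∀ n, 0 < b n)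
    (ha : Tendsto a atTop atTop) (hb : Tendsto b atTop atTop)
    (μ0 : ℝ) (hμ0 : 0 ≤ μ0)
    (hslln : ∀ᵐ ω ∂μ, Tendsto (fun n => U n ω / b n) atTop (nhds μ0))
    (hsup : ∀ᵐ ω ∂μ, limsup (fun n => a n * (U n ω / b n - μ0)) atTop = 1)
    (hinf : ∀ᵐ ω ∂μ, liminf (fun n => a n * (U n ω / b n - μ0)) atTop = -1)
    (g : ℝ → ℝ) (s : Set ℝ) (hs : s ∈ nhds μ0) (hg : ContDiffOn ℝ 1 g s)
    (hg' : deriv g μ0 ≠ 0) :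
    (∀ᵐ ω ∂μ, limsup (fun n => a n * (g (U n ω / b n) - g μ0)) atTop = |deriv g μ0|) ∧
    (∀ᵐ ω ∂μ, liminf (fun n => a n * (g (U n ω / b n) - g μ0)) atTop = -|deriv g μ0|) := by
  set c := deriv g μ0 with hcdef
  have hd : HasDerivAt g c μ0 :=
    ((hg.contDiffAt hs).differentiableAt one_ne_zero).hasDerivAt
  have hlo : (fun t => g t - g μ0 - (t - μ0) * c) =o[nhds μ0] fun t => t - μ0 := by
    have := hasDerivAt_iff_isLittleO.1 hd
    simpa [smul_eq_mul] using this
  have hmain : ∀ᵐ ω ∂μ,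
      (limsup (fun n => a n * (g (U n ω / b n) - g μ0)) atTop = |c|) ∧
      (liminf (fun n => a n * (g (U n ω / b n) - g μ0)) atTop = -|c|) := by
    filter_upwards [hslln, hsup, hinf] with ω hx hsω hiω
    set x : ℕ → ℝ := fun n => U n ω / b n with hxdef
    set y : ℕ → ℝ := fun n => a n * (x n - μ0) with hydef
    set z : ℕ → ℝ := fun n => a n * (g (x n) - g μ0) with hzdef
    apply aux_key c hg' y z hsω hiω
    -- the remaining goal: Tendsto (fun n => z n - c * y n) atTop (nhds 0)
    have hA : IsBoundedUnder (· ≤ ·) atTop y := aux_bdd_above (hsω ▸ one_ne_zero)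
    have hB : IsBoundedUnder (· ≥ ·) atTop y := aux_bdd_below (by rw [hiω]; norm_num)
    obtain ⟨M₁, hM₁⟩ := hA
    obtain ⟨M₂, hM₂⟩ := hB
    set M : ℝ := max (max M₁ (-M₂)) 0 + 1 with hMdef
    have hMpos : 0 < M := by positivity
    have hyM : ∀ᶠ n in atTop, |y n| ≤ M := by
      filter_upwards [eventually_map.1 hM₁, eventually_map.1 hM₂] with n h1 h2
      rw [abs_le]
      constructor
      · have : -M ≤ M₂ := by
          have : -M₂ ≤ max (max M₁ (-M₂)) 0 := le_max_of_le_left (le_max_right _ _)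
          linarith
        linarith
      · have : M₁ ≤ M := by
          have : M₁ ≤ max (max M₁ (-M₂)) 0 := le_max_of_le_left (le_max_left _ _)
          linarith
        linarith
    rw [NormedAddCommGroup.tendsto_nhds_zero]
    intro ε hε
    have hδ : 0 < ε / (2 * M) := by positivity
    have hev : ∀ᶠ t in nhds μ0, ‖g t - g μ0 - (t - μ0) * c‖ ≤ ε / (2 * M) * ‖t - μ0‖ :=
      hlo.def hδ
    filter_upwards [hx.eventually hev, hyM] with n hn hyn
    have han := ha_pos n
    have key : z n - c * y n = a n * (g (x n) - g μ0 - (x n - μ0) * c) := by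
      simp only [hzdef, hydef]; ring
    rw [key]
    have h1 : ‖a n * (g (x n) - g μ0 - (x n - μ0) * c)‖
        ≤ a n * (ε / (2 * M) * ‖x n - μ0‖) := by
      rw [norm_mul, Real.norm_eq_abs (a n), abs_of_pos han]
      exact mul_le_mul_of_nonneg_left hn han.le
    have h2 : a n * (ε / (2 * M) * ‖x n - μ0‖) = ε / (2 * M) * |y n| := by
      rw [hydef]
      simp only [Real.norm_eq_abs]
      rw [abs_mul, abs_of_pos han]
      ring
    have h3 : ε / (2 * M) * |y n| ≤ ε / (2 * M) * M :=
      mul_le_mul_of_nonneg_left hyn hδ.le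
    have h4 : ε / (2 * M) * M = ε / 2 := by field_simp
    calc ‖a n * (g (x n) - g μ0 - (x n - μ0) * c)‖
        ≤ ε / (2 * M) * M := by rw [← h2] at h3; linarith [h1, h3]
      _ = ε / 2 := h4
      _ < ε := by linarith
  exact ⟨hmain.mono fun ω h => h.1, hmain.mono fun ω h => h.2⟩
end

section
/- Suppose U_n/b_n → μ almost surely and limsup_n a_n(U_n/b_n - μ) = 1, liminf_n a_n(U_n/b_n - μ) = -1 almost surely, where a_n, b_n → ∞. If g is twice continuously differentiable in a neighbourhood of μ with g'(μ) = 0 and g''(μ) > 0, then almost surely limsup_n a_n² (g(U_n/b_n) - g(μ)) = g''(μ)/2. -/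
open MeasureTheory Filter Set

lemma taylor_bound (g : ℝ → ℝ) (μ0 : ℝ) (s : Set ℝ) (hs : s ∈ nhds μ0)
    (hg : ContDiffOn ℝ 2 g s) (hg' : deriv g μ0 = 0) :
    ∀ ε > (0:ℝ), ∀ᶠ y in nhds μ0,
      |g y - g μ0 - (deriv (deriv g) μ0 / 2) * (y - μ0)^2| ≤ ε * (y - μ0)^2 := by
  set L := deriv (deriv g) μ0 / 2 with hL
  set t := interior s with htdef
  have ht_open : IsOpen t := isOpen_interior
  have htμ : μ0 ∈ t := mem_interior_iff_mem_nhds.2 hs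
  have hgt : ContDiffOn ℝ 2 g t := hg.mono interior_subset
  have htn : t ∈ nhds μ0 := ht_open.mem_nhds htμ
  have hdg : ∀ x ∈ t, HasDerivAt g (deriv g x) x := fun x hx =>
    ((hgt.differentiableOn (by norm_num)).differentiableAt (ht_open.mem_nhds hx)).hasDerivAt
  have hdg2 : ContDiffOn ℝ 1 (deriv g) t := hgt.deriv_of_isOpen ht_open (by norm_num)
  have hdd : HasDerivAt (deriv g) (deriv (deriv g) μ0) μ0 :=
    ((hdg2.differentiableOn (by norm_num)).differentiableAt htn).hasDerivAt
  have hslope : Tendsto (slope (deriv g) μ0) (nhdsWithin μ0 {μ0}ᶜ) (nhds (deriv (deriv g) μ0)) :=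
    hasDerivAt_iff_tendsto_slope.1 hdd
  have hq : ∀ y : ℝ, HasDerivAt (fun y => (y - μ0)^2) (2*(y-μ0)) y := by
    intro y
    have := ((hasDerivAt_id y).sub_const μ0).fun_pow 2
    simpa using this
  have main : Tendsto (fun y => (g y - g μ0 - L * (y - μ0)^2) / (y - μ0)^2)
      (nhdsWithin μ0 {μ0}ᶜ) (nhds 0) := by
    apply HasDerivAt.lhopital_zero_nhdsNE (f' := fun y => deriv g y - L*(2*(y-μ0)))
      (g' := fun y => 2*(y-μ0))
    · filter_upwards [mem_nhdsWithin_of_mem_nhds htn] with y hy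
      exact ((hdg y hy).sub_const _).sub ((hq y).const_mul L)
    · exact Eventually.of_forall hq
    · filter_upwards [self_mem_nhdsWithin] with y hy
      simp only [mem_compl_iff, mem_singleton_iff] at hy
      simp [sub_eq_zero, hy]
    · have hc : ContinuousAt (fun y => g y - g μ0 - L * (y - μ0)^2) μ0 := by
        have hgc : ContinuousAt g μ0 := (hgt.continuousOn.continuousAt htn)
        fun_prop
      have : Tendsto (fun y => g y - g μ0 - L * (y - μ0)^2) (nhds μ0) (nhds 0) := by
        simpa using hc.tendsto
      exact this.mono_left nhdsWithin_le_nhds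
    · have : Tendsto (fun y : ℝ => (y - μ0)^2) (nhds μ0) (nhds 0) := by
        have : ContinuousAt (fun y : ℝ => (y - μ0)^2) μ0 := by fun_prop
        simpa using this.tendsto
      exact this.mono_left nhdsWithin_le_nhds
    · have h2 : Tendsto (fun y => slope (deriv g) μ0 y / 2 - L) (nhdsWithin μ0 {μ0}ᶜ)
          (nhds (deriv (deriv g) μ0 / 2 - L)) := (hslope.div_const 2).sub_const L
      have h3 : deriv (deriv g) μ0 / 2 - L = 0 := by rw [hL]; ring
      rw [h3] at h2
      apply h2.congr'
      filter_upwards [self_mem_nhdsWithin] with y hy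
      simp only [mem_compl_iff, mem_singleton_iff] at hy
      have hy' : y - μ0 ≠ 0 := sub_ne_zero.2 hy
      rw [slope_def_field]
      field_simp [hg']
      rw [hg']
      ring
  intro ε hε
  have hev : ∀ᶠ y in nhdsWithin μ0 {μ0}ᶜ,
      |g y - g μ0 - L * (y - μ0)^2| / (y - μ0)^2 < ε := by
    have := Metric.tendsto_nhds.1 main ε hε
    simpa [Real.dist_eq] using this
  rw [eventually_nhdsWithin_iff] at hev
  filter_upwards [hev] with y hy
  by_cases hyμ : y = μ0
  · subst hyμ; simp
  · have hyz : y - μ0 ≠ 0 := sub_ne_zero.2 hyμ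
    have hq2 : (0:ℝ) < (y - μ0)^2 := by positivity
    have := hy (by simpa using hyμ)
    rw [div_lt_iff₀ hq2] at this
    linarith


lemma key_limsup (a x : ℕ → ℝ) (μ0 L : ℝ) (hL : 0 < L) (G : ℝ → ℝ)
    (htay : ∀ ε > (0:ℝ), ∀ᶠ y in nhds μ0, |G y - L * (y - μ0)^2| ≤ ε * (y - μ0)^2)
    (hx : Tendsto x atTop (nhds μ0))
    (hsup : limsup (fun n => a n * (x n - μ0)) atTop = 1)
    (hinf : liminf (fun n => a n * (x n - μ0)) atTop = -1) :
    limsup (fun n => a n ^ 2 * G (x n)) atTop = L := by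
  set c : ℕ → ℝ := fun n => a n * (x n - μ0) with hc
  set D : ℕ → ℝ := fun n => a n ^ 2 * G (x n) with hD
  -- boundedness of c
  have hBA : IsBoundedUnder (· ≤ ·) atTop c := by
    rcases Set.eq_empty_or_nonempty {r : ℝ | ∀ᶠ n in atTop, c n ≤ r} with he | ⟨K, hK⟩
    · rw [limsup_eq, he, Real.sInf_empty] at hsup; norm_num at hsup
    · exact ⟨K, eventually_map.2 hK⟩
  have hBB : IsBoundedUnder (· ≥ ·) atTop c := by
    rcases Set.eq_empty_or_nonempty {r : ℝ | ∀ᶠ n in atTop, r ≤ c n} with he | ⟨K, hK⟩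
    · rw [liminf_eq, he, Real.sSup_empty] at hinf; norm_num at hinf
    · exact ⟨K, eventually_map.2 hK⟩
  -- eventual bounds on c for any ε > 0
  have hub : ∀ ε > (0:ℝ), ∀ᶠ n in atTop, c n < 1 + ε := by
    intro ε hε
    exact eventually_lt_of_limsup_lt (by rw [hsup]; linarith) hBA
  have hlb : ∀ ε > (0:ℝ), ∀ᶠ n in atTop, -(1 + ε) < c n := by
    intro ε hε
    exact eventually_lt_of_lt_liminf (by rw [hinf]; linarith) hBB
  -- eventual taylor control along the sequence
  have htayn : ∀ ε > (0:ℝ), ∀ᶠ n in atTop, |G (x n) - L * (x n - μ0)^2| ≤ ε * (x n - μ0)^2 :=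
    fun ε hε => hx.eventually (htay ε hε)
  -- pointwise conversion
  have hDc : ∀ ε > (0:ℝ), ∀ n, |G (x n) - L * (x n - μ0)^2| ≤ ε * (x n - μ0)^2 →
      |D n - L * c n ^ 2| ≤ ε * c n ^ 2 := by
    intro ε hε n h
    have h1 : c n ^ 2 = a n ^ 2 * (x n - μ0)^2 := by rw [hc]; ring
    have h2 : D n - L * c n ^ 2 = a n ^ 2 * (G (x n) - L * (x n - μ0)^2) := by
      rw [hD, h1]; ring
    rw [h2, h1, abs_mul, abs_of_nonneg (sq_nonneg (a n)), ← mul_assoc,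
      mul_comm ε (a n ^ 2), mul_assoc]
    exact mul_le_mul_of_nonneg_left h (sq_nonneg (a n))
  -- eventual two-sided bound on c^2
  have hc2 : ∀ ε > (0:ℝ), ∀ᶠ n in atTop, c n ^ 2 ≤ (1 + ε)^2 := by
    intro ε hε
    filter_upwards [hub ε hε, hlb ε hε] with n h1 h2
    exact sq_le_sq' (le_of_lt h2) (le_of_lt h1)
  -- D is bounded
  have hDb : ∀ᶠ n in atTop, |D n| ≤ (1 + |L|) * (1 + 1)^2 := by
    filter_upwards [htayn 1 one_pos, hc2 1 one_pos] with n h1 h2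
    have h3 := hDc 1 one_pos n h1
    have h4 : (0:ℝ) ≤ c n ^ 2 := sq_nonneg _
    have h5 := abs_le.1 h3
    have h6 : |L * c n ^ 2| ≤ |L| * (1+1)^2 := by
      rw [abs_mul, abs_of_nonneg h4]
      exact mul_le_mul_of_nonneg_left h2 (abs_nonneg L)
    have h7 := abs_le.1 h6
    have h8 : (1 + |L|) * (1 + 1)^2 = |L| * (1+1)^2 + 4 := by ring
    have h9 : (1:ℝ) * c n ^ 2 = c n ^ 2 := by ring
    rw [abs_le]
    constructor <;> [skip; skip] <;> rw [h8] <;> linarith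
  have hDub : IsBoundedUnder (· ≤ ·) atTop D :=
    ⟨(1 + |L|) * (1 + 1)^2, eventually_map.2 (hDb.mono fun n h => (abs_le.1 h).2)⟩
  have hDlb : IsBoundedUnder (· ≥ ·) atTop D :=
    ⟨-((1 + |L|) * (1 + 1)^2), eventually_map.2 (hDb.mono fun n h => (abs_le.1 h).1)⟩
  apply le_antisymm
  · -- upper bound
    apply le_of_forall_pos_le_add
    intro ε' hε'
    have hcont : Tendsto (fun e : ℝ => (L + e) * (1 + e)^2) (nhdsWithin 0 (Set.Ioi 0)) (nhds L) := by
      have hco : Continuous fun e : ℝ => (L + e) * (1 + e)^2 := by continuity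
      have := hco.tendsto 0
      simp only [add_zero, one_pow, mul_one] at this
      exact this.mono_left nhdsWithin_le_nhds
    have hev : ∀ᶠ e in nhdsWithin (0:ℝ) (Set.Ioi 0), (L + e) * (1 + e)^2 < L + ε' :=
      hcont.eventually_lt_const (by linarith)
    obtain ⟨ε, hεlt, hε⟩ := (hev.and self_mem_nhdsWithin).exists
    replace hε : (0:ℝ) < ε := hε
    have hev2 : ∀ᶠ n in atTop, D n ≤ (L + ε) * (1 + ε)^2 := by
      filter_upwards [htayn ε hε, hc2 ε hε] with n h1 h2
      have h3 := (abs_le.1 (hDc ε hε n h1)).2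
      have h4 : D n ≤ (L + ε) * c n ^ 2 := by
        have : (L + ε) * c n ^ 2 = L * c n ^ 2 + ε * c n ^ 2 := by ring
        linarith
      calc D n ≤ (L + ε) * c n ^ 2 := h4
        _ ≤ (L + ε) * (1 + ε)^2 := by
            apply mul_le_mul_of_nonneg_left h2 (by linarith)
    have := limsup_le_of_le hDlb.isCoboundedUnder_le hev2
    linarith
  · -- lower bound
    have : ∀ ε' > (0:ℝ), L - ε' ≤ limsup D atTop := by
      intro ε' hε'
      have hcont : Tendsto (fun e : ℝ => (L - e) * (1 - e)^2) (nhdsWithin 0 (Set.Ioi 0))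
          (nhds L) := by
        have hco : Continuous fun e : ℝ => (L - e) * (1 - e)^2 := by continuity
        have := hco.tendsto 0
        simp only [sub_zero, one_pow, mul_one] at this
        exact this.mono_left nhdsWithin_le_nhds
      have hev : ∀ᶠ e in nhdsWithin (0:ℝ) (Set.Ioi 0), L - ε' < (L - e) * (1 - e)^2 :=
        hcont.eventually_const_lt (by linarith)
      have hsmall : Set.Ioo (0:ℝ) (min 1 L) ∈ nhdsWithin (0:ℝ) (Set.Ioi 0) :=
        Ioo_mem_nhdsGT_of_mem ⟨le_refl 0, lt_min one_pos hL⟩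
      obtain ⟨ε, hεlt, hεmem⟩ := (hev.and hsmall).exists
      obtain ⟨hε, hεm⟩ := hεmem
      have hε1 : ε < 1 := lt_of_lt_of_le hεm (min_le_left _ _)
      have hεL : ε < L := lt_of_lt_of_le hεm (min_le_right _ _)
      -- frequently c n > 1 - ε
      have hfreq : ∃ᶠ n in atTop, 1 - ε < c n :=
        frequently_lt_of_lt_limsup hBB.isCoboundedUnder_le (by rw [hsup]; linarith)
      have hfreq2 : ∃ᶠ n in atTop, L - ε' ≤ D n := by
        apply (hfreq.and_eventually (htayn ε hε)).mono
        rintro n ⟨h1, h2⟩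
        have h3 := (abs_le.1 (hDc ε hε n h2)).1
        have h4 : (1 - ε)^2 ≤ c n ^ 2 := pow_le_pow_left₀ (by linarith) (le_of_lt h1) 2
        have h5 : (L - ε) * (1 - ε)^2 ≤ (L - ε) * c n ^ 2 :=
          mul_le_mul_of_nonneg_left h4 (by linarith)
        have h6 : (L - ε) * c n ^ 2 = L * c n ^ 2 - ε * c n ^ 2 := by ring
        linarith
      have := le_limsup_of_frequently_le hfreq2 hDub
      linarith
    by_contra hcon
    push_neg at hcon
    obtain ⟨ε', hε'⟩ := exists_between hcon
    have := this (L - ε') (by linarith)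
    linarith

theorem stmt_16 {Ω : Type*} [MeasurableSpace Ω] (μ : Measure Ω) [IsProbabilityMeasure μ]
    (U : ℕ → Ω → ℝ) (a b : ℕ → ℝ)
    (ha_pos : ∀ n, 0 < a n) (hb_pos : ∀ n, 0 < b n)
    (ha : Tendsto a atTop atTop) (hb : Tendsto b atTop atTop)
    (μ0 : ℝ)
    (hslln : ∀ᵐ ω ∂μ, Tendsto (fun n => U n ω / b n) atTop (nhds μ0))
    (hsup : ∀ᵐ ω ∂μ, limsup (fun n => a n * (U n ω / b n - μ0)) atTop = 1)
    (hinf : ∀ᵐ ω ∂μ, liminf (fun n => a n * (U n ω / b n - μ0)) atTop = -1)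
    (g : ℝ → ℝ) (s : Set ℝ) (hs : s ∈ nhds μ0) (hg : ContDiffOn ℝ 2 g s)
    (hg' : deriv g μ0 = 0) (hg'' : 0 < deriv (deriv g) μ0) :
    ∀ᵐ ω ∂μ, limsup (fun n => (a n) ^ 2 * (g (U n ω / b n) - g μ0)) atTop =
      deriv (deriv g) μ0 / 2 := by
  filter_upwards [hslln, hsup, hinf] with ω h1 h2 h3
  exact key_limsup a (fun n => U n ω / b n) μ0 (deriv (deriv g) μ0 / 2) (half_pos hg'')
    (fun y => g y - g μ0) (taylor_bound g μ0 s hs hg hg') h1 h2 h3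
end
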